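/- arXiv:1307.0089 — 11 statements merged into one kernel-verified Lean document; each statement's English description precedes it below -/
import Mathlib

section
/- Let G be a finite group, H a subgroup of G, and N a normal subgroup of G. If H satisfies the Π-property in G, then HN/N satisfies the Π-property in G/N. -/
open scoped Pointwise

/-- `(K, L)` is a chief factor of `G`: both normal, `K < L`, and no normal
subgroup of `G` lies strictly between them (equivalently `L/K` is a minimal
normal subgroup of `G/K`). -/
def IsChiefFactor (G : Type*) [Group G] (K L : Subgroup G) : Prop :=
  K.Normal ∧ L.Normal ∧ K < L ∧
    ∀ N : Subgroup G, N.Normal → K ≤ N → N ≤ L → N = K ∨ N = L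

/-- `H` satisfies the Π-property in `G`: for every chief factor `L/K` of `G`,
every prime dividing `|G/K : N_{G/K}(HK/K ∩ L/K)|` divides `|HK/K ∩ L/K|`. -/
def PiProperty (G : Type*) [Group G] (H : Subgroup G) : Prop :=
  ∀ (K L : Subgroup G) (hK : K.Normal), IsChiefFactor G K L →
    ∀ p : ℕ, p.Prime →
      p ∣ (Subgroup.normalizer ((Subgroup.map (@QuotientGroup.mk' G _ K hK) H ⊓
            Subgroup.map (@QuotientGroup.mk' G _ K hK) L : Subgroup (G ⧸ K)) : Set (G ⧸ K))).index →
      p ∣ Nat.card ↥(Subgroup.map (@QuotientGroup.mk' G _ K hK) H ⊓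
            Subgroup.map (@QuotientGroup.mk' G _ K hK) L)

/-- `H` is Π-supplemented in `G`. -/
def PiSupplemented (G : Type*) [Group G] (H : Subgroup G) : Prop :=
  ∃ T : Subgroup G, (H : Set G) * (T : Set G) = (Set.univ : Set G) ∧
    ∃ I : Subgroup G, H ⊓ T ≤ I ∧ I ≤ H ∧ PiProperty G I

lemma aux_index_map {A B : Type*} [Group A] [Group B] (e : A ≃* B) (S : Subgroup A) :
    (Subgroup.map e.toMonoidHom S).index = S.index := by
  rw [Subgroup.index_map]
  have hker : e.toMonoidHom.ker = ⊥ := (MonoidHom.ker_eq_bot_iff _).mpr e.injective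
  have hrange : e.toMonoidHom.range = ⊤ := MonoidHom.range_eq_top_of_surjective _ e.surjective
  rw [hker, hrange, sup_bot_eq, Subgroup.index_top, mul_one]

lemma aux_norm_map {A B : Type*} [Group A] [Group B] (e : A ≃* B) (S : Subgroup A) :
    Subgroup.map e.toMonoidHom (Subgroup.normalizer (S : Set A)) =
      Subgroup.normalizer ((Subgroup.map e.toMonoidHom S : Subgroup B) : Set B) := by
  exact Subgroup.map_equiv_normalizer_eq S e

lemma aux_card_map {A B : Type*} [Group A] [Group B] (e : A ≃* B) (S : Subgroup A) :
    Nat.card ↥(Subgroup.map e.toMonoidHom S) = Nat.card ↥S :=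
  (Nat.card_congr (Subgroup.equivMapOfInjective S e.toMonoidHom e.injective).toEquiv).symm

theorem piProperty_quotient {G : Type*} [Group G] [Finite G]
    (H N : Subgroup G) [N.Normal] (h : PiProperty G H) :
    PiProperty (G ⧸ N) (Subgroup.map (QuotientGroup.mk' N) H) := by
  intro Kb Lb hKb hcf p hp hdvd
  have hsurj : Function.Surjective (QuotientGroup.mk' N) := QuotientGroup.mk'_surjective N
  have hker : (QuotientGroup.mk' N).ker = N := QuotientGroup.ker_mk' N
  obtain ⟨K, hNK, rfl⟩ : ∃ K : Subgroup G, N ≤ K ∧ K.map (QuotientGroup.mk' N) = Kb :=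
    ⟨Kb.comap (QuotientGroup.mk' N), by
      intro x hx
      have : (QuotientGroup.mk' N) x = 1 := (QuotientGroup.eq_one_iff x).mpr hx
      rw [Subgroup.mem_comap, this]; exact Kb.one_mem,
      Subgroup.map_comap_eq_self_of_surjective hsurj _⟩
  obtain ⟨L, hNL, rfl⟩ : ∃ L : Subgroup G, N ≤ L ∧ L.map (QuotientGroup.mk' N) = Lb :=
    ⟨Lb.comap (QuotientGroup.mk' N), by
      intro x hx
      have : (QuotientGroup.mk' N) x = 1 := (QuotientGroup.eq_one_iff x).mpr hx
      rw [Subgroup.mem_comap, this]; exact Lb.one_mem,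
      Subgroup.map_comap_eq_self_of_surjective hsurj _⟩
  obtain ⟨-, hLbn, hKLb, hminb⟩ := hcf
  have hcm : ∀ M : Subgroup G, N ≤ M →
      (M.map (QuotientGroup.mk' N)).comap (QuotientGroup.mk' N) = M :=
    fun M hM => Subgroup.comap_map_eq_self (hker.le.trans hM)
  haveI hKn : K.Normal := by
    have := hKb.comap (QuotientGroup.mk' N)
    rwa [hcm K hNK] at this
  haveI hLn : L.Normal := by
    have := hLbn.comap (QuotientGroup.mk' N)
    rwa [hcm L hNL] at this
  have chief : IsChiefFactor G K L := by
    refine ⟨hKn, hLn, ?_, ?_⟩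
    · rw [lt_iff_le_and_ne] at hKLb ⊢
      refine ⟨?_, fun e => hKLb.2 (by rw [e])⟩
      have := Subgroup.comap_mono (f := QuotientGroup.mk' N) hKLb.1
      rwa [hcm K hNK, hcm L hNL] at this
    · intro M hM hKM hML
      have hNM : N ≤ M := hNK.trans hKM
      rcases hminb (M.map (QuotientGroup.mk' N)) (hM.map _ hsurj)
        (Subgroup.map_mono hKM) (Subgroup.map_mono hML) with h1 | h1
      · left; rw [← hcm M hNM, h1, hcm K hNK]
      · right; rw [← hcm M hNM, h1, hcm L hNL]
  have key := h K L hKn chief p hp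
  -- transport via the third isomorphism theorem
  set φ : (G ⧸ N) ⧸ (K.map (QuotientGroup.mk' N)) ≃* G ⧸ K :=
    QuotientGroup.quotientQuotientEquivQuotient N K hNK with hφ
  have hcomp : ∀ S : Subgroup G,
      Subgroup.map φ.toMonoidHom
        (Subgroup.map (QuotientGroup.mk' (K.map (QuotientGroup.mk' N)))
          (Subgroup.map (QuotientGroup.mk' N) S)) =
      Subgroup.map (QuotientGroup.mk' K) S := by
    intro S
    have heq : (φ.toMonoidHom.comp (QuotientGroup.mk' (K.map (QuotientGroup.mk' N)))).comp
        (QuotientGroup.mk' N) = QuotientGroup.mk' K := by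
      ext x
      exact QuotientGroup.quotientQuotientEquivQuotientAux_mk_mk N K hNK x
    rw [Subgroup.map_map, Subgroup.map_map, heq]
  set Z := (Subgroup.map (QuotientGroup.mk' (K.map (QuotientGroup.mk' N)))
      (Subgroup.map (QuotientGroup.mk' N) H) ⊓
    Subgroup.map (QuotientGroup.mk' (K.map (QuotientGroup.mk' N)))
      (Subgroup.map (QuotientGroup.mk' N) L)) with hZ
  have hmapZ : Subgroup.map φ.toMonoidHom Z =
      Subgroup.map (QuotientGroup.mk' K) H ⊓ Subgroup.map (QuotientGroup.mk' K) L := by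
    rw [hZ, Subgroup.map_inf _ _ φ.toMonoidHom φ.injective, hcomp, hcomp]
  have hidx : (Subgroup.normalizer (Z : Set ((G ⧸ N) ⧸ Subgroup.map (QuotientGroup.mk' N) K))).index =
      (Subgroup.normalizer ((Subgroup.map (QuotientGroup.mk' K) H ⊓
        Subgroup.map (QuotientGroup.mk' K) L : Subgroup (G ⧸ K)) : Set (G ⧸ K))).index := by
    rw [← hmapZ, ← aux_norm_map φ Z, aux_index_map]
  have hcard : Nat.card Z =
      Nat.card ↥(Subgroup.map (QuotientGroup.mk' K) H ⊓
        Subgroup.map (QuotientGroup.mk' K) L) := by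
    rw [← hmapZ, aux_card_map]
  have hdvd' : p ∣ (Subgroup.normalizer (Z : Set ((G ⧸ N) ⧸ Subgroup.map (QuotientGroup.mk' N) K))).index := hdvd
  show p ∣ Nat.card Z
  rw [hcard]
  exact key (hidx ▸ hdvd')
end

section
/- Let G be a finite group, H a subgroup, and N a normal subgroup of G with N ≤ H. If H is Π-supplemented in G, then H/N is Π-supplemented in G/N. -/
open scoped Pointwise

theorem piSupplemented_quotient_of_le {G : Type*} [Group G] [Finite G]
    (H N : Subgroup G) [N.Normal] (hNH : N ≤ H) (h : PiSupplemented G H) :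
    PiSupplemented (G ⧸ N) (Subgroup.map (QuotientGroup.mk' N) H) := by
  obtain ⟨T, hT, I, hHTI, hIH, hPi⟩ := h
  set π := QuotientGroup.mk' N with hπdef
  have hπs : Function.Surjective π := QuotientGroup.mk'_surjective N
  have hkerπ : π.ker = N := QuotientGroup.ker_mk' N
  have hker_le : ∀ {M : Subgroup G}, N ≤ M → π.ker ≤ M :=
    fun hm => le_trans (le_of_eq hkerπ) hm
  refine ⟨Subgroup.map π T, ?_, Subgroup.map π I, ?_, Subgroup.map_mono hIH, ?_⟩
  · ext x
    simp only [Set.mem_univ, iff_true]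
    obtain ⟨g, rfl⟩ := hπs x
    have hg : g ∈ ((H : Set G) * (T : Set G)) := by rw [hT]; trivial
    obtain ⟨a, ha, b, hb, rfl⟩ := hg
    exact ⟨π a, ⟨a, ha, rfl⟩, π b, ⟨b, hb, rfl⟩, (map_mul π a b).symm⟩
  · rintro x ⟨⟨a, ha, rfl⟩, ⟨b, hb, hab⟩⟩
    obtain ⟨z, hz, hbz⟩ := (QuotientGroup.mk'_eq_mk' N).mp hab
    have hbH : b ∈ H := by
      have hba : b = a * z⁻¹ := by rw [← hbz]; group
      rw [hba]
      exact H.mul_mem ha (H.inv_mem (hNH hz))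
    exact ⟨b, hHTI ⟨hbH, hb⟩, hab⟩
  · intro K' L' hK' hCF p hp hdvd
    obtain ⟨hK'n, hL'n, hKL', hmin'⟩ := hCF
    obtain ⟨K, hKn, hNK, rfl⟩ : ∃ K : Subgroup G, K.Normal ∧ N ≤ K ∧ Subgroup.map π K = K' :=
      ⟨Subgroup.comap π K', hK'n.comap π,
        fun x hx => by
          rw [Subgroup.mem_comap, hπdef, QuotientGroup.mk'_apply,
            (QuotientGroup.eq_one_iff x).mpr hx]
          exact K'.one_mem,
        Subgroup.map_comap_eq_self_of_surjective hπs K'⟩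
    obtain ⟨L, hLn, hNL, rfl⟩ : ∃ L : Subgroup G, L.Normal ∧ N ≤ L ∧ Subgroup.map π L = L' :=
      ⟨Subgroup.comap π L', hL'n.comap π,
        fun x hx => by
          rw [Subgroup.mem_comap, hπdef, QuotientGroup.mk'_apply,
            (QuotientGroup.eq_one_iff x).mpr hx]
          exact L'.one_mem,
        Subgroup.map_comap_eq_self_of_surjective hπs L'⟩
    haveI := hKn
    have hKc : Subgroup.comap π (Subgroup.map π K) = K :=
      Subgroup.comap_map_eq_self (hker_le hNK)
    have hLc : Subgroup.comap π (Subgroup.map π L) = L :=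
      Subgroup.comap_map_eq_self (hker_le hNL)
    have hKL : K < L := by
      refine lt_of_le_of_ne ?_ ?_
      · rw [← hKc, ← hLc]; exact Subgroup.comap_mono hKL'.le
      · rintro rfl; exact hKL'.ne rfl
    have hCFG : IsChiefFactor G K L := by
      refine ⟨hKn, hLn, hKL, fun M hMn hKM hML => ?_⟩
      have hMc : Subgroup.comap π (Subgroup.map π M) = M :=
        Subgroup.comap_map_eq_self (hker_le (hNK.trans hKM))
      rcases hmin' (Subgroup.map π M) (hMn.map π hπs)
          (Subgroup.map_mono hKM) (Subgroup.map_mono hML) with hM | hM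
      · left; rw [← hMc, hM, hKc]
      · right; rw [← hMc, hM, hLc]
    obtain ⟨ψ, hψ, hbij⟩ : ∃ ψ : ((G ⧸ N) ⧸ (Subgroup.map π K)) →* G ⧸ K,
        (ψ.comp (QuotientGroup.mk' (Subgroup.map π K))).comp π = QuotientGroup.mk' K ∧
          Function.Bijective ψ := by
      refine ⟨(QuotientGroup.quotientQuotientEquivQuotient N K hNK).toMonoidHom, ?_,
        (QuotientGroup.quotientQuotientEquivQuotient N K hNK).bijective⟩
      ext g
      rfl
    have key : ∀ S : Subgroup G,
        Subgroup.map ψ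
          (Subgroup.map (QuotientGroup.mk' (Subgroup.map π K)) (Subgroup.map π S)) =
        Subgroup.map (QuotientGroup.mk' K) S := by
      intro S
      rw [Subgroup.map_map, Subgroup.map_map, hψ]
    have hAB : Subgroup.map ψ
        (Subgroup.map (QuotientGroup.mk' (Subgroup.map π K)) (Subgroup.map π I) ⊓
          Subgroup.map (QuotientGroup.mk' (Subgroup.map π K)) (Subgroup.map π L)) =
        Subgroup.map (QuotientGroup.mk' K) I ⊓ Subgroup.map (QuotientGroup.mk' K) L := by
      rw [Subgroup.map_inf _ _ _ hbij.1, key, key]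
    have hkerψ : ψ.ker = ⊥ := (MonoidHom.ker_eq_bot_iff _).mpr hbij.1
    have hidx : (Subgroup.normalizer ((Subgroup.map (QuotientGroup.mk' K) I ⊓
        Subgroup.map (QuotientGroup.mk' K) L : Subgroup (G ⧸ K)) : Set (G ⧸ K))).index =
        (Subgroup.normalizer ((Subgroup.map (QuotientGroup.mk' (Subgroup.map π K)) (Subgroup.map π I) ⊓
          Subgroup.map (QuotientGroup.mk' (Subgroup.map π K)) (Subgroup.map π L) :
            Subgroup ((G ⧸ N) ⧸ Subgroup.map π K)) : Set ((G ⧸ N) ⧸ Subgroup.map π K))).index := by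
      rw [← hAB, ← Subgroup.map_normalizer_eq_of_bijective _ hbij,
        Subgroup.index_map_eq _ hbij.2 (by rw [hkerψ]; exact bot_le)]
    have hcard : Nat.card ↥(Subgroup.map (QuotientGroup.mk' K) I ⊓
        Subgroup.map (QuotientGroup.mk' K) L) =
        Nat.card ↥(Subgroup.map (QuotientGroup.mk' (Subgroup.map π K)) (Subgroup.map π I) ⊓
          Subgroup.map (QuotientGroup.mk' (Subgroup.map π K)) (Subgroup.map π L)) := by
      rw [← hAB]
      exact (Nat.card_congr (Subgroup.equivMapOfInjective _ _ hbij.1).toEquiv).symm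
    have hfinal := hPi K L hKn hCFG p hp (by rw [hidx]; exact hdvd)
    rw [hcard] at hfinal
    exact hfinal
end

section
/- Let G be a finite group, H a subgroup, and N a normal subgroup of G with gcd(|H|,|N|) = 1. If H is Π-supplemented in G, then HN/N is Π-supplemented in G/N. -/
open scoped Pointwise

private lemma relindex_mul_card_inf {G : Type*} [Group G] (X Y : Subgroup G) :
    X.relIndex Y * Nat.card (X ⊓ Y : Subgroup G) = Nat.card Y := by
  have h1 : Nat.card ((X.subgroupOf Y).map Y.subtype) = Nat.card (X.subgroupOf Y) :=
    (Nat.card_congr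
      ((X.subgroupOf Y).equivMapOfInjective Y.subtype Y.subtype_injective).toEquiv).symm
  rw [Subgroup.subgroupOf_map_subtype] at h1
  rw [h1, Subgroup.relIndex, mul_comm]
  exact Subgroup.card_mul_index (X.subgroupOf Y)

private lemma index_map_equiv' {G G' : Type*} [Group G] [Group G'] (e : G ≃* G')
    (S : Subgroup G) : (S.map e.toMonoidHom).index = S.index := by
  have hker : e.toMonoidHom.ker = ⊥ := (MonoidHom.ker_eq_bot_iff _).mpr e.injective
  exact Subgroup.index_map_eq S e.surjective (hker ▸ bot_le)

private lemma card_map_equiv' {G G' : Type*} [Group G] [Group G'] (e : G ≃* G')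
    (S : Subgroup G) : Nat.card (S.map e.toMonoidHom) = Nat.card S :=
  (Nat.card_congr (S.equivMapOfInjective e.toMonoidHom e.injective).toEquiv).symm

private lemma map_mk_comp {G : Type*} [Group G] (N K : Subgroup G) [hN : N.Normal]
    [hK : K.Normal] (h : N ≤ K) (hQ : (K.map (QuotientGroup.mk' N)).Normal)
    (S : Subgroup G) :
    Subgroup.map (@QuotientGroup.mk' _ _ (K.map (QuotientGroup.mk' N)) hQ)
        (S.map (QuotientGroup.mk' N)) =
      Subgroup.map (QuotientGroup.quotientQuotientEquivQuotient N K h).symm.toMonoidHom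
        (S.map (QuotientGroup.mk' K)) := by
  rw [Subgroup.map_map, Subgroup.map_map]
  congr 1

theorem piSupplemented_quotient_of_coprime {G : Type*} [Group G] [Finite G]
    (H N : Subgroup G) [N.Normal]
    (hcop : Nat.Coprime (Nat.card H) (Nat.card N)) (h : PiSupplemented G H) :
    PiSupplemented (G ⧸ N) (Subgroup.map (QuotientGroup.mk' N) H) := by
  obtain ⟨T, hHT, I, hITle, hIH, hPi⟩ := h
  have hsurj : Function.Surjective (QuotientGroup.mk' N) := QuotientGroup.mk'_surjective N
  -- Step 1 : `N ≤ T`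
  have hIndT : T.index ∣ Nat.card H := by
    have horb : MulAction.orbit H ((1 : G) : G ⧸ T) = Set.univ := by
      ext y
      simp only [Set.mem_univ, iff_true]
      induction y using QuotientGroup.induction_on with
      | H g =>
        have hg : g ∈ (H : Set G) * (T : Set G) := by rw [hHT]; trivial
        obtain ⟨a, ha, b, hb, rfl⟩ := hg
        refine ⟨⟨a, ha⟩, ?_⟩
        show (⟨a, ha⟩ : H) • ((1 : G) : G ⧸ T) = ((a * b : G) : G ⧸ T)
        rw [show (⟨a, ha⟩ : H) • ((1 : G) : G ⧸ T) = a • ((1 : G) : G ⧸ T) from rfl, MulAction.Quotient.smul_mk, smul_eq_mul, mul_one]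
        refine (QuotientGroup.eq (s := T) (a := a) (b := a * b)).mpr ?_
        simpa using hb
    have hstab := MulAction.index_stabilizer H ((1 : G) : G ⧸ T)
    rw [horb, Set.ncard_univ] at hstab
    have hTi : T.index = (MulAction.stabilizer H ((1 : G) : G ⧸ T)).index := by
      rw [hstab]; rfl
    rw [hTi]
    exact Subgroup.index_dvd_card (G := H) (H := MulAction.stabilizer H ((1 : G) : G ⧸ T))
  have hNT : N ≤ T := by
    have c2 : T.relIndex (T ⊔ N) * Nat.card T = Nat.card (T ⊔ N : Subgroup G) := by
      have := relindex_mul_card_inf T (T ⊔ N)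
      rwa [inf_of_le_left (le_sup_left : T ≤ T ⊔ N)] at this
    have c1 : N.relIndex (T ⊔ N) * Nat.card N = Nat.card (T ⊔ N : Subgroup G) := by
      have := relindex_mul_card_inf N (T ⊔ N)
      rwa [inf_of_le_left (le_sup_right : N ≤ T ⊔ N)] at this
    have c3 : N.relIndex (T ⊔ N) = N.relIndex T := Subgroup.relIndex_sup_right T N
    have c4 : N.relIndex T * Nat.card (N ⊓ T : Subgroup G) = Nat.card T :=
      relindex_mul_card_inf N T
    have c5 : T.relIndex N * Nat.card (T ⊓ N : Subgroup G) = Nat.card N :=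
      relindex_mul_card_inf T N
    have hcc : Nat.card (N ⊓ T : Subgroup G) = Nat.card (T ⊓ N : Subgroup G) := by
      rw [inf_comm]
    have hpos : 0 < N.relIndex T * Nat.card (T ⊓ N : Subgroup G) := by
      rw [← hcc, c4]
      exact Nat.card_pos
    have key : T.relIndex (T ⊔ N) = T.relIndex N := by
      refine Nat.eq_of_mul_eq_mul_right hpos ?_
      calc T.relIndex (T ⊔ N) * (N.relIndex T * Nat.card (T ⊓ N : Subgroup G))
          = T.relIndex (T ⊔ N) * (N.relIndex T * Nat.card (N ⊓ T : Subgroup G)) := by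
            rw [hcc]
        _ = T.relIndex (T ⊔ N) * Nat.card T := by rw [c4]
        _ = Nat.card (T ⊔ N : Subgroup G) := c2
        _ = N.relIndex (T ⊔ N) * Nat.card N := c1.symm
        _ = N.relIndex T * Nat.card N := by rw [c3]
        _ = N.relIndex T * (T.relIndex N * Nat.card (T ⊓ N : Subgroup G)) := by rw [c5]
        _ = T.relIndex N * (N.relIndex T * Nat.card (T ⊓ N : Subgroup G)) := by ring
    have hd2 : T.relIndex N ∣ T.index :=
      key ▸ Subgroup.relIndex_dvd_index_of_le (le_sup_left : T ≤ T ⊔ N)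
    have hd1 : T.relIndex N ∣ Nat.card N := Subgroup.index_dvd_card (G := N) (H := T.subgroupOf N)
    have hgcd : T.relIndex N ∣ Nat.gcd (Nat.card H) (Nat.card N) :=
      Nat.dvd_gcd (hd2.trans hIndT) hd1
    have h1 : Nat.gcd (Nat.card H) (Nat.card N) = 1 := hcop
    rw [h1] at hgcd
    exact Subgroup.relIndex_eq_one.mp (Nat.dvd_one.mp hgcd)
  -- Step 2 : build the supplement in the quotient
  refine ⟨T.map (QuotientGroup.mk' N), ?_, I.map (QuotientGroup.mk' N), ?_,
    Subgroup.map_mono hIH, ?_⟩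
  · -- the product covers `G ⧸ N`
    rw [Subgroup.coe_map, Subgroup.coe_map, ← Set.image_mul, hHT, Set.image_univ,
      Set.range_eq_univ]
    exact hsurj
  · -- intersection is contained in the image of `I`
    rintro x ⟨⟨a, ha, rfl⟩, b, hb, hba⟩
    have hmem : b⁻¹ * a ∈ N := by
      have : (QuotientGroup.mk' N) (b⁻¹ * a) = 1 := by
        rw [map_mul, map_inv, hba, inv_mul_cancel]
      rwa [← QuotientGroup.ker_mk' N, MonoidHom.mem_ker]
    have haT : a ∈ T := by
      have : b * (b⁻¹ * a) ∈ T := T.mul_mem hb (hNT hmem)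
      simpa using this
    exact ⟨a, hITle ⟨ha, haT⟩, rfl⟩
  · -- Π-property passes to the quotient
    intro K' L' hK' hCF
    set K : Subgroup G := Subgroup.comap (QuotientGroup.mk' N) K' with hKdef
    set L : Subgroup G := Subgroup.comap (QuotientGroup.mk' N) L' with hLdef
    have hNK : N ≤ K := by
      intro n hn
      refine Subgroup.mem_comap.mpr ?_
      have h1 : ((n : G) : G ⧸ N) = 1 := (QuotientGroup.eq_one_iff n).mpr hn
      show ((n : G) : G ⧸ N) ∈ K'
      rw [h1]
      exact K'.one_mem
    have hKmap : K' = K.map (QuotientGroup.mk' N) :=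
      (Subgroup.map_comap_eq_self_of_surjective hsurj K').symm
    have hLmap : L' = L.map (QuotientGroup.mk' N) :=
      (Subgroup.map_comap_eq_self_of_surjective hsurj L').symm
    haveI hKn : K.Normal := hK'.comap _
    have hLn : L.Normal := hCF.2.1.comap _
    have hCFG : IsChiefFactor G K L := by
      refine ⟨hKn, hLn, ?_, ?_⟩
      · refine lt_of_le_of_ne (Subgroup.comap_mono hCF.2.2.1.le) fun hEq => ?_
        exact hCF.2.2.1.ne (by rw [hKmap, hLmap, hEq])
      · intro M hM hKM hML
        have hNM : N ≤ M := le_trans hNK hKM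
        have hMc : Subgroup.comap (QuotientGroup.mk' N) (M.map (QuotientGroup.mk' N)) = M :=
          Subgroup.comap_map_eq_self (by rw [QuotientGroup.ker_mk']; exact hNM)
        rcases hCF.2.2.2 (M.map (QuotientGroup.mk' N)) (hM.map _ hsurj)
            (by rw [hKmap]; exact Subgroup.map_mono hKM)
            (by rw [hLmap]; exact Subgroup.map_mono hML) with h1 | h1
        · left; rw [← hMc, h1, hKdef]
        · right; rw [← hMc, h1, hLdef]
    revert hK'
    rw [hKmap, hLmap]
    intro hQ p hp hd
    have einj : Function.Injective
        ((QuotientGroup.quotientQuotientEquivQuotient N K hNK).symm.toMonoidHom) :=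
      (QuotientGroup.quotientQuotientEquivQuotient N K hNK).symm.injective
    rw [map_mk_comp N K hNK hQ I, map_mk_comp N K hNK hQ L,
      ← Subgroup.map_inf (Subgroup.map (QuotientGroup.mk' K) I)
        (Subgroup.map (QuotientGroup.mk' K) L)
        (QuotientGroup.quotientQuotientEquivQuotient N K hNK).symm.toMonoidHom einj]
      at hd ⊢
    rw [← Subgroup.map_equiv_normalizer_eq _
        (QuotientGroup.quotientQuotientEquivQuotient N K hNK).symm,
      index_map_equiv' (QuotientGroup.quotientQuotientEquivQuotient N K hNK).symm] at hd
    rw [card_map_equiv' (QuotientGroup.quotientQuotientEquivQuotient N K hNK).symm]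
    exact hPi K L hKn hCFG p hp hd
end

section
/- Let G = ⟨a, b | a^5 = b^4 = 1, b⁻¹ a b = a²⟩ (the Frobenius group of order 20) and let H = ⟨b²⟩. Then H is not c-supplemented in G, i.e., there is no subgroup T of G with G = HT and H ∩ T ≤ H_G, where H_G is the core of H in G. -/
open scoped Pointwise

/-- `H` is c-supplemented in `G`: there is `T ≤ G` with `G = HT` and
`H ∩ T ≤ H_G`, the normal core of `H` in `G`. -/
def CSupplemented (G : Type*) [Group G] (H : Subgroup G) : Prop :=
  ∃ T : Subgroup G, (H : Set G) * (T : Set G) = (Set.univ : Set G) ∧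
    H ⊓ T ≤ H.normalCore

theorem not_cSupplemented_in_frobenius20 {G : Type*} [Group G] (a b : G)
    (ha : a ^ 5 = 1) (hb : b ^ 4 = 1) (hrel : b⁻¹ * a * b = a ^ 2)
    (hgen : Subgroup.closure ({a, b} : Set G) = ⊤) (hcard : Nat.card G = 20) :
    ¬ CSupplemented G (Subgroup.zpowers (b ^ 2)) := by
  have hfin : Finite G := Nat.finite_of_card_ne_zero (by rw [hcard]; norm_num)
  -- b a b⁻¹ = a ^ 3
  have hx2 : (b * a * b⁻¹) ^ 2 = a := by
    rw [show (b * a * b⁻¹) ^ 2 = b * (a * a) * b⁻¹ by simp [pow_succ, mul_assoc],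
        show a * a = a ^ 2 from (pow_two a).symm, ← hrel]
    simp [mul_assoc]
  have hx5 : (b * a * b⁻¹) ^ 5 = 1 := by
    rw [show (b * a * b⁻¹) ^ 5 = b * a ^ 5 * b⁻¹ by simp [pow_succ, mul_assoc], ha]
    simp
  have key : b * a * b⁻¹ = a ^ 3 := by
    calc b * a * b⁻¹ = ((b * a * b⁻¹) ^ 2) ^ 3 * ((b * a * b⁻¹) ^ 5)⁻¹ := by group
      _ = a ^ 3 := by rw [hx2, hx5]; group
  -- b⁻² a b² = a⁴
  have hbb : b⁻¹ * (b⁻¹ * a * b) * b = a ^ 4 := by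
    rw [hrel, show b⁻¹ * a ^ 2 * b = (b⁻¹ * a * b) * (b⁻¹ * a * b) by simp [pow_succ, mul_assoc],
        hrel]
    rw [← pow_add]
  set A := Subgroup.zpowers a with hA
  have hAnorm : A.Normal := by
    rw [← Subgroup.normalizer_eq_top_iff, eq_top_iff, ← hgen, Subgroup.closure_le]
    rintro x (rfl | rfl) <;> rw [SetLike.mem_coe]
    · exact Subgroup.le_normalizer (Subgroup.mem_zpowers _)
    · rw [Subgroup.mem_normalizer_iff]
      intro h
      simp only [hA, Subgroup.mem_zpowers_iff]
      constructor
      · rintro ⟨k, rfl⟩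
        refine ⟨3 * k, ?_⟩
        rw [← conj_zpow, key, ← zpow_natCast a 3, ← zpow_mul]
        norm_num [mul_comm]
      · rintro ⟨k, hk⟩
        have hh : h = x⁻¹ * a ^ k * x := by rw [hk]; group
        refine ⟨2 * k, ?_⟩
        have hc : x⁻¹ * a ^ k * x = (x⁻¹ * a * x) ^ k := by
          calc x⁻¹ * a ^ k * x = x⁻¹ * a ^ k * (x⁻¹)⁻¹ := by rw [inv_inv]
            _ = (x⁻¹ * a * (x⁻¹)⁻¹) ^ k := conj_zpow.symm
            _ = (x⁻¹ * a * x) ^ k := by rw [inv_inv]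
        rw [hh, hc, hrel, ← zpow_natCast a 2, ← zpow_mul]
        norm_num [mul_comm]
  -- the quotient G / A is cyclic generated by the image of b
  have hsurj := QuotientGroup.mk'_surjective A
  have htop : Subgroup.map (QuotientGroup.mk' A) ⊤ = ⊤ :=
    Subgroup.map_top_of_surjective _ hsurj
  have hπa : (QuotientGroup.mk' A) a = 1 := (QuotientGroup.eq_one_iff a).mpr (Subgroup.mem_zpowers a)
  have hQ : Subgroup.zpowers ((QuotientGroup.mk' A) b) = ⊤ := by
    rw [eq_top_iff, ← htop, ← hgen, MonoidHom.map_closure, Set.image_insert_eq,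
        Set.image_singleton, hπa, Subgroup.closure_le]
    rintro x (rfl | rfl)
    · exact Subgroup.one_mem _
    · exact Subgroup.mem_zpowers _
  have hob : orderOf ((QuotientGroup.mk' A) b) = A.index := by
    rw [← Nat.card_zpowers, hQ, Subgroup.index_eq_card]
    exact Nat.card_congr Subgroup.topEquiv.toEquiv
  have hidvd : A.index ∣ 4 := by
    rw [← hob]; exact orderOf_dvd_of_pow_eq_one (by rw [← map_pow, hb, map_one])
  have hA5 : Nat.card A ∣ 5 := by rw [hA, Nat.card_zpowers]; exact orderOf_dvd_of_pow_eq_one ha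
  have hmul : Nat.card A * A.index = 20 := by rw [Subgroup.card_mul_index, hcard]
  have hAcard : Nat.card A = 5 := by
    rcases (by norm_num : Nat.Prime 5).eq_one_or_self_of_dvd _ hA5 with h | h
    · exfalso; rw [h, one_mul] at hmul
      have := Nat.le_of_dvd (by norm_num) hidvd; omega
    · exact h
  have hIdx : A.index = 4 := by rw [hAcard] at hmul; omega
  have hordb : orderOf b = 4 := by
    have h1 : orderOf ((QuotientGroup.mk' A) b) ∣ orderOf b := orderOf_map_dvd _ b
    rw [hob, hIdx] at h1
    exact Nat.dvd_antisymm (orderOf_dvd_of_pow_eq_one hb) h1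
  have ho2 : orderOf (b ^ 2) = 2 := by rw [orderOf_pow, hordb]; norm_num
  have hb2ne : b ^ 2 ≠ 1 := by
    intro h; rw [h, orderOf_one] at ho2; omega
  have hane : a ≠ 1 := by
    intro h; rw [hA, h, Subgroup.zpowers_one_eq_bot] at hAcard
    simp [Nat.card_eq_fintype_card] at hAcard
  have hcardH : Nat.card (Subgroup.zpowers (b ^ 2)) = 2 := by rw [Nat.card_zpowers, ho2]
  rintro ⟨T, hprod, hint⟩
  -- b^2 ∈ T
  have hT : b ^ 2 ∈ T := by
    have hsurj2 : Function.Surjective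
        (fun h : (Subgroup.zpowers (b ^ 2)) => ((h : G) : G ⧸ T)) := by
      intro q
      induction q using QuotientGroup.induction_on with | H g =>
        have hg : g ∈ ((Subgroup.zpowers (b ^ 2) : Subgroup G) : Set G) * (T : Set G) := by
          rw [hprod]; trivial
        obtain ⟨h, hh, t, ht, rfl⟩ := hg
        exact ⟨⟨h, hh⟩, (QuotientGroup.mk_mul_of_mem h ht).symm⟩
    have hle : T.index ≤ 2 := by
      have h1 := Nat.card_le_card_of_surjective _ hsurj2
      rw [hcardH] at h1
      rw [Subgroup.index_eq_card]
      exact h1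
    have hne : T.index ≠ 0 := Subgroup.index_ne_zero_of_finite
    rcases (by omega : T.index = 1 ∨ T.index = 2) with h | h
    · rw [Subgroup.index_eq_one.mp h]; trivial
    · exact Subgroup.sq_mem_of_index_two h b
  have hcore : b ^ 2 ∈ (Subgroup.zpowers (b ^ 2)).normalCore :=
    hint ⟨Subgroup.mem_zpowers _, hT⟩
  have hconj : a * b ^ 2 * a⁻¹ ∈ Subgroup.zpowers (b ^ 2) :=
    Subgroup.normalCore_le _
      ((Subgroup.normalCore_normal _).conj_mem _ hcore a)
  rw [Subgroup.mem_zpowers_iff] at hconj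
  obtain ⟨k, hk⟩ := hconj
  have hbk : ∀ m : ℤ, ((b ^ 2 : G)) ^ (2 * m) = 1 := by
    intro m
    rw [zpow_mul, show ((b ^ 2 : G)) ^ (2 : ℤ) = b ^ 4 by rw [zpow_two, ← pow_add],
        hb, one_zpow]
  rcases Int.even_or_odd k with ⟨m, hm⟩ | ⟨m, hm⟩
  · rw [hm, show m + m = 2 * m by ring, hbk] at hk
    exact hb2ne (conj_eq_one_iff.mp hk.symm)
  · rw [hm, zpow_add, hbk, one_mul, zpow_one] at hk
    -- a commutes with b^2
    have hcomm : a * b ^ 2 = b ^ 2 * a := by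
      nth_rewrite 2 [hk]; group
    have ha4 : a ^ 4 = a := by
      rw [← hbb]
      have : a * (b * b) = b * b * a := by
        rw [show b * b = b ^ 2 from (pow_two b).symm]; exact hcomm
      calc b⁻¹ * (b⁻¹ * a * b) * b = b⁻¹ * b⁻¹ * (a * (b * b)) := by group
        _ = b⁻¹ * b⁻¹ * (b * b * a) := by rw [this]
        _ = a := by group
    have ha2 : a ^ 2 = 1 := by
      have h5 : a ^ 5 = a ^ 2 := by
        calc a ^ 5 = a ^ 4 * a := by rw [← pow_succ]
          _ = a * a := by rw [ha4]
          _ = a ^ 2 := (pow_two a).symm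
      rw [← h5, ha]
    have : a = 1 := by
      have := ha4
      rw [show a ^ 4 = (a ^ 2) ^ 2 by rw [← pow_mul], ha2, one_pow] at this
      exact this.symm
    exact hane this
end

section
/- Let P be a finite p-group and α a p'-automorphism of P (an automorphism whose order is coprime to p). If α acts trivially on Ω₂(P), the subgroup generated by all elements of order dividing p², then α = 1. -/
open Subgroup
open scoped commutatorElement

universe u

section Helpers

variable {P : Type u} [Group P]

/-- Restriction of an automorphism to an invariant subgroup. -/
def autRestrict (α : MulAut P) (H : Subgroup P) (h1 : ∀ v ∈ H, α v ∈ H)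
    (h2 : ∀ v ∈ H, α⁻¹ v ∈ H) : MulAut H where
  toFun v := ⟨α v, h1 v v.2⟩
  invFun v := ⟨α⁻¹ v, h2 v v.2⟩
  left_inv v := by
    ext
    simp [MulAut.inv_def]
  right_inv v := by
    ext
    simp [MulAut.inv_def]
  map_mul' v w := by
    ext
    simp

lemma autRestrict_apply (α : MulAut P) (H : Subgroup P) (h1 : ∀ v ∈ H, α v ∈ H)
    (h2 : ∀ v ∈ H, α⁻¹ v ∈ H) (v : H) :
    ((autRestrict α H h1 h2 v : H) : P) = α (v : P) := rfl

lemma autRestrict_pow_apply (α : MulAut P) (H : Subgroup P) (h1 : ∀ v ∈ H, α v ∈ H)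
    (h2 : ∀ v ∈ H, α⁻¹ v ∈ H) (j : ℕ) : ∀ v : H,
    (((autRestrict α H h1 h2) ^ j) v : P) = (α ^ j) (v : P) := by
  induction j with
  | zero => intro v; simp
  | succ j ih =>
    intro v
    rw [pow_succ, pow_succ, MulAut.mul_apply, MulAut.mul_apply, ih, autRestrict_apply]

/-- If `α u = u * c` with `c` fixed by `α`, then (coprimality) `u` is fixed. -/
lemma fixed_of_mul [Finite P] (p : ℕ) (hp : p.Prime) (hP : IsPGroup p P) (α : MulAut P)
    (hord : Nat.Coprime (orderOf α) p) (u c : P) (h1 : α u = u * c) (h2 : α c = c) :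
    α u = u := by
  have hcj : ∀ j : ℕ, (α ^ j) c = c := by
    intro j
    induction j with
    | zero => rfl
    | succ j ih => rw [pow_succ, MulAut.mul_apply, h2, ih]
  have hj : ∀ j : ℕ, (α ^ j) u = u * c ^ j := by
    intro j
    induction j with
    | zero => simp
    | succ j ih =>
      rw [pow_succ' α j, MulAut.mul_apply, ih, map_mul, h1, map_pow, h2, mul_assoc,
        ← pow_succ' c j]
  have hm : u = u * c ^ orderOf α := by
    have h := hj (orderOf α)
    rw [pow_orderOf_eq_one] at h
    exact h
  have hcm : c ^ orderOf α = 1 := (left_eq_mul.mp hm)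
  obtain ⟨k, hk⟩ := hP c
  have d1 : orderOf c ∣ orderOf α := orderOf_dvd_of_pow_eq_one hcm
  have d2 : orderOf c ∣ p ^ k := orderOf_dvd_of_pow_eq_one hk
  have hco : Nat.Coprime (orderOf α) (p ^ k) := hord.pow_right k
  have : orderOf c ∣ 1 := (Nat.dvd_gcd d1 d2).trans (by rw [hco])
  have hc1 : c = 1 := orderOf_eq_one_iff.mp (Nat.dvd_one.mp this)
  rw [h1, hc1, mul_one]

/-- Automorphisms preserve the commutator subgroup. -/
lemma aut_mem_commutator (σ : MulAut P) {v : P} (hv : v ∈ _root_.commutator P) :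
    σ v ∈ _root_.commutator P := by
  have hmap : (_root_.commutator P).map σ.toMonoidHom = _root_.commutator P := by
    conv_lhs => rw [_root_.commutator_def P, Subgroup.map_commutator,
      Subgroup.map_top_of_surjective _ σ.surjective]
    exact (_root_.commutator_def P).symm
  rw [← hmap]
  exact Subgroup.mem_map_of_mem _ hv

lemma commute_aux (t v b : P) (h : t * b * t⁻¹ * b⁻¹ = t * v * t⁻¹ * v⁻¹) :
    Commute (v⁻¹ * b) t := by
  have h'' : t * (b * (t⁻¹ * b⁻¹)) = t * (v * (t⁻¹ * v⁻¹)) := by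
    simpa [mul_assoc] using h
  have h' := mul_left_cancel h''
  have e : (v⁻¹ * b) * t⁻¹ = t⁻¹ * (v⁻¹ * b) := by
    have e1 : v⁻¹ * (b * (t⁻¹ * b⁻¹)) * b = v⁻¹ * (v * (t⁻¹ * v⁻¹)) * b := by rw [h']
    simpa [mul_assoc] using e1
  have : Commute (v⁻¹ * b) t⁻¹ := e
  simpa using this.inv_right

lemma tri_succ (k : ℕ) : (k + 1) * k / 2 = k * (k - 1) / 2 + k := by
  cases k with
  | zero => simp
  | succ j =>
    obtain ⟨a, ha⟩ := Nat.even_mul_succ_self j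
    obtain ⟨b, hb⟩ := Nat.even_mul_succ_self (j + 1)
    have h1 : (j + 1 + 1) * (j + 1) = (j + 1) * (j + 1 + 1) := Nat.mul_comm _ _
    have h2 : (j + 1) * (j + 1 - 1) = j * (j + 1) := by
      simp [Nat.mul_comm]
    have h3 : (j + 1) * (j + 1 + 1) = j * (j + 1) + 2 * (j + 1) := by ring
    have hab : b + b = a + a + 2 * (j + 1) := by rw [← hb, h3, ha]
    rw [h1, h2, hb, ha]
    omega

lemma tri_dvd (p n : ℕ) (hp : p.Prime) (hn : 3 ≤ n) :
    p ^ (n - 2) ∣ p ^ (n - 1) * (p ^ (n - 1) - 1) / 2 := by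
  rcases hp.eq_two_or_odd' with h2 | hodd
  · subst h2
    have hN : 2 ^ (n - 1) = 2 * 2 ^ (n - 2) := by
      rw [← pow_succ']
      congr 1
      omega
    rw [hN, mul_assoc, Nat.mul_div_cancel_left _ (by norm_num : 0 < 2)]
    exact Dvd.dvd.mul_right dvd_rfl _
  · have hNodd : Odd (p ^ (n - 1)) := hodd.pow
    have h2 : 2 ∣ p ^ (n - 1) - 1 := by
      obtain ⟨m, hm⟩ := hNodd
      omega
    rw [Nat.mul_div_assoc _ h2]
    exact dvd_mul_of_dvd_left (pow_dvd_pow p (by omega)) _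

end Helpers

theorem aux_omega2 (N : ℕ) : ∀ {P : Type u} [Group P] [Finite P] (p : ℕ),
    p.Prime → IsPGroup p P → Nat.card P ≤ N →
    ∀ α : MulAut P, Nat.Coprime (orderOf α) p →
    (∀ y : P, y ^ p ^ 2 = 1 → α y = y) → α = 1 := by
  induction N with
  | zero =>
    intro P _ _ p hp hP hcard α hord hfix
    have := Nat.card_pos (α := P)
    omega
  | succ N IH =>
    intro P _ _ p hp hP hcard α hord hfix
    by_contra hα
    have hne : ∃ u : P, α u ≠ u := by
      by_contra h
      push_neg at h
      exact hα (MulEquiv.ext h)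
    obtain ⟨u₀, hu₀⟩ := hne
    have hnt : Nontrivial P := ⟨⟨α u₀, u₀, hu₀⟩⟩
    -- proper invariant subgroups are pointwise fixed
    have hInv : ∀ H : Subgroup P, H ≠ ⊤ → (∀ v ∈ H, α v ∈ H) → (∀ v ∈ H, α⁻¹ v ∈ H) →
        ∀ v ∈ H, α v = v := by
      intro H hHtop h1 h2 v hv
      have hcardH : Nat.card H ≤ N := by
        have hdvd : Nat.card H ∣ Nat.card P := Subgroup.card_subgroup_dvd_card H
        have hle : Nat.card H ≤ Nat.card P :=
          Nat.le_of_dvd (Nat.card_pos) hdvd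
        have hne' : Nat.card H ≠ Nat.card P := fun h => hHtop (Subgroup.eq_top_of_card_eq H h)
        omega
      set β := autRestrict α H h1 h2 with hβ
      have hβm : β ^ orderOf α = 1 := by
        apply MulEquiv.ext
        intro w
        have h := autRestrict_pow_apply α H h1 h2 (orderOf α) w
        rw [pow_orderOf_eq_one] at h
        exact Subtype.ext h
      have hβord : orderOf β ∣ orderOf α := orderOf_dvd_of_pow_eq_one hβm
      have hβcop : Nat.Coprime (orderOf β) p := Nat.Coprime.coprime_dvd_left hβord hord
      have hβfix : ∀ w : H, w ^ p ^ 2 = 1 → β w = w := by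
        intro w hw
        have hw' : (w : P) ^ p ^ 2 = 1 := by
          have := congrArg (Subtype.val) hw
          simpa using this
        exact Subtype.ext (hfix _ hw')
      have hβ1 : β = 1 := IH p hp (hP.to_subgroup H) hcardH β hβcop hβfix
      have h' : β ⟨v, hv⟩ = ⟨v, hv⟩ := by rw [hβ1]; rfl
      exact congrArg Subtype.val h'
    -- commutator subgroup is proper
    haveI : Fact p.Prime := ⟨hp⟩
    have hcomm_ne_top : _root_.commutator P ≠ ⊤ := by
      intro htop
      haveI : Group.IsNilpotent P := hP.isNilpotent
      obtain ⟨k, hk⟩ := _root_.nilpotent_iff_lowerCentralSeries.mp this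
      have hall : ∀ j : ℕ, Subgroup.lowerCentralSeries (⊤ : Subgroup P) j = ⊤ := by
        intro j
        induction j with
        | zero => exact Subgroup.lowerCentralSeries_zero _
        | succ j ihj =>
          have hstep : Subgroup.lowerCentralSeries (⊤ : Subgroup P) (j + 1) = ⁅Subgroup.lowerCentralSeries (⊤ : Subgroup P) j, ⊤⁆ := rfl
          rw [hstep, ihj, ← _root_.commutator_def, htop]
      have : (⊤ : Subgroup P) = ⊥ := by rw [← hall k, hk]
      have h1 : (α u₀ : P) = 1 := by
        have : α u₀ ∈ (⊥ : Subgroup P) := this ▸ mem_top _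
        simpa using this
      have h2 : (u₀ : P) = 1 := by
        have : u₀ ∈ (⊥ : Subgroup P) := this ▸ mem_top _
        simpa using this
      exact hu₀ (by rw [h1, h2])
    -- commutator subgroup is pointwise fixed
    have hP' : ∀ t ∈ _root_.commutator P, α t = t :=
      hInv (_root_.commutator P) hcomm_ne_top (fun v hv => aut_mem_commutator α hv)
        (fun v hv => aut_mem_commutator α⁻¹ hv)
    -- displacements centralize the commutator subgroup
    have hd : ∀ (v t : P), t ∈ _root_.commutator P → Commute (v⁻¹ * α v) t := by
      intro v t ht
      have hmem : ⁅t, v⁆ ∈ _root_.commutator P := by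
        rw [_root_.commutator_def]
        exact Subgroup.commutator_mem_commutator (mem_top t) (mem_top v)
      have h1 : α ⁅t, v⁆ = ⁅t, v⁆ := hP' _ hmem
      have h2 : α ⁅t, v⁆ = ⁅t, α v⁆ := by
        rw [map_commutatorElement, hP' t ht]
      have h3 : t * α v * t⁻¹ * (α v)⁻¹ = t * v * t⁻¹ * v⁻¹ := by
        have := h2.symm.trans h1
        simpa [commutatorElement_def] using this
      exact commute_aux t v (α v) h3
    -- the commutator subgroup is central
    have hcen : ∀ t ∈ _root_.commutator P, ∀ v : P, Commute t v := by
      by_cases hHtop : Subgroup.centralizer ((_root_.commutator P : Subgroup P) : Set P) = ⊤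
      · intro t ht v
        have hv : v ∈ Subgroup.centralizer ((_root_.commutator P : Subgroup P) : Set P) :=
          hHtop ▸ mem_top v
        exact Subgroup.mem_centralizer_iff.mp hv t ht
      · exfalso
        have inv1 : ∀ v ∈ Subgroup.centralizer ((_root_.commutator P : Subgroup P) : Set P),
            α v ∈ Subgroup.centralizer ((_root_.commutator P : Subgroup P) : Set P) := by
          intro v hv
          rw [Subgroup.mem_centralizer_iff] at hv ⊢
          intro s hs
          have hs' : α⁻¹ s ∈ _root_.commutator P := aut_mem_commutator α⁻¹ hs
          have h := hv (α⁻¹ s) hs'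
          have happ := congrArg α h
          rw [map_mul, map_mul] at happ
          rw [show α ((α⁻¹ : MulAut P) s) = s from by
            rw [MulAut.inv_def]; exact α.apply_symm_apply s] at happ
          exact happ
        have inv2 : ∀ v ∈ Subgroup.centralizer ((_root_.commutator P : Subgroup P) : Set P),
            α⁻¹ v ∈ Subgroup.centralizer ((_root_.commutator P : Subgroup P) : Set P) := by
          intro v hv
          rw [Subgroup.mem_centralizer_iff] at hv ⊢
          intro s hs
          have hs' : α s ∈ _root_.commutator P := aut_mem_commutator α hs
          have h := hv (α s) hs'
          have happ := congrArg (α⁻¹ : MulAut P) h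
          rw [map_mul, map_mul] at happ
          rw [show (α⁻¹ : MulAut P) (α s) = s from by
            rw [MulAut.inv_def]; exact α.symm_apply_apply s] at happ
          exact happ
        have hfixHc := hInv _ hHtop inv1 inv2
        have hall : ∀ v : P, α v = v := by
          intro v
          have hA : v⁻¹ * α v ∈ Subgroup.centralizer ((_root_.commutator P : Subgroup P) : Set P) := by
            rw [Subgroup.mem_centralizer_iff]
            intro s hs
            exact (hd v s hs).symm
          exact fixed_of_mul p hp hP α hord v _ (mul_inv_cancel_left v (α v)).symm
            (hfixHc _ hA)
        exact hu₀ (hall u₀)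
    -- choose a non-fixed element of minimal order
    have hSne : {k : ℕ | ∃ y : P, α y ≠ y ∧ orderOf y = k}.Nonempty :=
      ⟨orderOf u₀, u₀, hu₀, rfl⟩
    obtain ⟨x, hx, hxord⟩ := Nat.sInf_mem hSne
    have hmin : ∀ y : P, orderOf y < orderOf x → α y = y := by
      intro y hy
      by_contra h
      have : sInf {k : ℕ | ∃ y : P, α y ≠ y ∧ orderOf y = k} ≤ orderOf y :=
        Nat.sInf_le ⟨y, h, rfl⟩
      omega
    obtain ⟨k₀, hk₀⟩ := hP x
    obtain ⟨n, hnle, hn⟩ := (Nat.dvd_prime_pow hp).mp (orderOf_dvd_of_pow_eq_one hk₀)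
    have hn3 : 3 ≤ n := by
      by_contra h
      push_neg at h
      have : orderOf x ∣ p ^ 2 := hn ▸ pow_dvd_pow p (by omega)
      exact hx (hfix x (orderOf_dvd_iff_pow_eq_one.mp this))
    have hp1 : 1 < p := hp.one_lt
    -- g = x ^ p is fixed
    have hgpow : (x ^ p) ^ p ^ (n - 1) = 1 := by
      rw [← pow_mul]
      have he : p * p ^ (n - 1) = p ^ n := by
        rw [← pow_succ']
        congr 1
        omega
      rw [he, ← hn, pow_orderOf_eq_one]
    have hglt : orderOf (x ^ p) < orderOf x := by
      have hdvd := orderOf_dvd_of_pow_eq_one hgpow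
      have hle := Nat.le_of_dvd (Nat.pow_pos (by omega)) hdvd
      have hlt : p ^ (n - 1) < p ^ n := pow_lt_pow_right₀ hp1 (by omega)
      omega
    have hgfix : α (x ^ p) = x ^ p := hmin _ hglt
    -- g = x ^ p is central
    have hgcomm : ∀ v : P, Commute (x ^ p) v := by
      by_cases hK : Subgroup.centralizer {x ^ p} = ⊤
      · intro v
        have hv : v ∈ Subgroup.centralizer {x ^ p} := hK ▸ mem_top v
        exact Subgroup.mem_centralizer_iff.mp hv (x ^ p) rfl
      · exfalso
        have hginv : (α⁻¹ : MulAut P) (x ^ p) = x ^ p := by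
          conv_lhs => rw [← hgfix]
          rw [MulAut.inv_def]
          exact α.symm_apply_apply _
        have inv1 : ∀ v ∈ Subgroup.centralizer {x ^ p},
            α v ∈ Subgroup.centralizer {x ^ p} := by
          intro v hv
          rw [Subgroup.mem_centralizer_iff] at hv ⊢
          intro s hs
          rcases hs with rfl
          have h := hv (x ^ p) rfl
          have happ := congrArg α h
          rw [map_mul, map_mul, hgfix] at happ
          exact happ
        have inv2 : ∀ v ∈ Subgroup.centralizer {x ^ p},
            (α⁻¹ : MulAut P) v ∈ Subgroup.centralizer {x ^ p} := by
          intro v hv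
          rw [Subgroup.mem_centralizer_iff] at hv ⊢
          intro s hs
          rcases hs with rfl
          have h := hv (x ^ p) rfl
          have happ := congrArg (α⁻¹ : MulAut P) h
          rw [map_mul, map_mul, hginv] at happ
          exact happ
        have hfixK := hInv _ hK inv1 inv2
        refine hx (hfixK x ?_)
        rw [Subgroup.mem_centralizer_iff]
        intro s hs
        rcases hs with rfl
        exact (Commute.refl x).pow_left p
    -- the final computation
    set c := x⁻¹ * α x with hc
    have hαx : α x = x * c := (mul_inv_cancel_left x (α x)).symm
    set w := c * x * c⁻¹ * x⁻¹ with hwdef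
    have hwmem : w ∈ _root_.commutator P := by
      have h : ⁅c, x⁆ ∈ ⁅(⊤ : Subgroup P), ⊤⁆ :=
        Subgroup.commutator_mem_commutator (mem_top c) (mem_top x)
      rw [_root_.commutator_def]
      rw [hwdef]
      simpa [commutatorElement_def] using h
    have hw : ∀ v : P, Commute w v := fun v => hcen w hwmem v
    have hsemi : SemiconjBy c x (w * x) := by
      show c * x = (w * x) * c
      rw [hwdef]
      group
    have hck : ∀ k : ℕ, c * x ^ k = (w ^ k * x ^ k) * c := by
      intro k
      have h1 := hsemi.pow_right k
      have h2 : (w * x) ^ k = w ^ k * x ^ k := (hw x).mul_pow k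
      rw [SemiconjBy, h2] at h1
      exact h1
    have hckx : ∀ k : ℕ, c ^ k * x = (w ^ k * x) * c ^ k := by
      intro k
      induction k with
      | zero => simp
      | succ k ih =>
        calc c ^ (k + 1) * x = c * (c ^ k * x) := by rw [pow_succ' c k, mul_assoc c (c ^ k) x]
          _ = c * ((w ^ k * x) * c ^ k) := by rw [ih]
          _ = (c * (w ^ k * x)) * c ^ k := by rw [← mul_assoc c (w ^ k * x) (c ^ k)]
          _ = ((c * w ^ k) * x) * c ^ k := by rw [← mul_assoc c (w ^ k) x]
          _ = ((w ^ k * c) * x) * c ^ k := by rw [← ((hw c).pow_left k).eq]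
          _ = (w ^ k * (c * x)) * c ^ k := by rw [mul_assoc (w ^ k) c x]
          _ = (w ^ k * ((w * x) * c)) * c ^ k := by rw [hsemi.eq]
          _ = ((w ^ k * (w * x)) * c) * c ^ k := by rw [← mul_assoc (w ^ k) (w * x) c]
          _ = (w ^ k * (w * x)) * c ^ (k + 1) := by
                rw [mul_assoc (w ^ k * (w * x)) c (c ^ k), ← pow_succ' c k]
          _ = ((w ^ k * w) * x) * c ^ (k + 1) := by rw [← mul_assoc (w ^ k) w x]
          _ = (w ^ (k + 1) * x) * c ^ (k + 1) := by rw [← pow_succ w k]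
    have hpow : ∀ k : ℕ, (x * c) ^ k = w ^ (k * (k - 1) / 2) * (x ^ k * c ^ k) := by
      intro k
      induction k with
      | zero => simp
      | succ k ih =>
        rw [pow_succ (x * c) k, ih, mul_assoc (w ^ (k * (k - 1) / 2)) (x ^ k * c ^ k) (x * c)]
        have e2 : (x ^ k * c ^ k) * (x * c) = (w ^ k * x ^ (k + 1)) * c ^ (k + 1) := by
          calc (x ^ k * c ^ k) * (x * c) = x ^ k * ((c ^ k * x) * c) := by
                rw [mul_assoc (x ^ k) (c ^ k) (x * c), ← mul_assoc (c ^ k) x c]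
            _ = x ^ k * (((w ^ k * x) * c ^ k) * c) := by rw [hckx k]
            _ = x ^ k * ((w ^ k * x) * c ^ (k + 1)) := by
                rw [mul_assoc (w ^ k * x) (c ^ k) c, ← pow_succ c k]
            _ = (x ^ k * (w ^ k * x)) * c ^ (k + 1) := by
                rw [← mul_assoc (x ^ k) (w ^ k * x) (c ^ (k + 1))]
            _ = ((x ^ k * w ^ k) * x) * c ^ (k + 1) := by rw [← mul_assoc (x ^ k) (w ^ k) x]
            _ = ((w ^ k * x ^ k) * x) * c ^ (k + 1) := by rw [← ((hw (x ^ k)).pow_left k).eq]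
            _ = (w ^ k * x ^ (k + 1)) * c ^ (k + 1) := by
                rw [mul_assoc (w ^ k) (x ^ k) x, ← pow_succ x k]
        rw [e2]
        rw [← mul_assoc (w ^ (k * (k - 1) / 2)) (w ^ k * x ^ (k + 1)) (c ^ (k + 1))]
        rw [← mul_assoc (w ^ (k * (k - 1) / 2)) (w ^ k) (x ^ (k + 1))]
        rw [← pow_add w (k * (k - 1) / 2) k]
        rw [mul_assoc (w ^ (k * (k - 1) / 2 + k)) (x ^ (k + 1)) (c ^ (k + 1))]
        have e3 : (k + 1) * (k + 1 - 1) / 2 = k * (k - 1) / 2 + k := by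
          rw [Nat.add_sub_cancel]
          exact tri_succ k
        rw [e3]
    set NN := p ^ (n - 1) with hNN
    have hxNfix : α (x ^ NN) = x ^ NN := by
      apply hmin
      have h1 : (x ^ NN) ^ p = 1 := by
        rw [← pow_mul]
        have he : NN * p = p ^ n := by
          rw [hNN, ← pow_succ]
          congr 1
          omega
        rw [he, ← hn, pow_orderOf_eq_one]
      have h2 := Nat.le_of_dvd hp.pos (orderOf_dvd_of_pow_eq_one h1)
      have h3 : p < p ^ n := by
        calc p = p ^ 1 := (pow_one p).symm
          _ < p ^ n := pow_lt_pow_right₀ hp1 (by omega)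
      omega
    have hkey : (x * c) ^ NN = x ^ NN := by
      rw [← hαx, ← map_pow, hxNfix]
    have hwsmall : w ^ p ^ (n - 2) = 1 := by
      have hxe : x ^ p ^ (n - 2) = (x ^ p) ^ p ^ (n - 3) := by
        rw [← pow_mul]
        congr 1
        rw [← pow_succ']
        congr 1
        omega
      have hcx2 : c * x ^ p ^ (n - 2) = x ^ p ^ (n - 2) * c := by
        rw [hxe]
        exact ((hgcomm c).pow_left (p ^ (n - 3))).symm
      have h := hck (p ^ (n - 2))
      rw [hcx2] at h
      have h2 : x ^ p ^ (n - 2) = w ^ p ^ (n - 2) * x ^ p ^ (n - 2) := mul_right_cancel h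
      exact (right_eq_mul.mp h2)
    have hwT : w ^ (NN * (NN - 1) / 2) = 1 := by
      obtain ⟨q, hq⟩ := tri_dvd p n hp hn3
      show w ^ (p ^ (n - 1) * (p ^ (n - 1) - 1) / 2) = 1
      rw [hq, pow_mul, hwsmall, one_pow]
    have hfinal := hpow NN
    rw [hkey, hwT, one_mul] at hfinal
    have hcNN : c ^ NN = 1 := left_eq_mul.mp hfinal
    have hclt : orderOf c < orderOf x := by
      have h1 := Nat.le_of_dvd (Nat.pow_pos (by omega : 0 < p)) (orderOf_dvd_of_pow_eq_one hcNN)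
      have h2 : p ^ (n - 1) < p ^ n := pow_lt_pow_right₀ hp1 (by omega)
      omega
    have hαc : α c = c := hmin c hclt
    exact hx (fixed_of_mul p hp hP α hord x c hαx hαc)

theorem pprime_aut_trivial_of_fixes_omega2 {P : Type*} [Group P] [Finite P]
    (p : ℕ) (hp : p.Prime) (hP : IsPGroup p P) (α : MulAut P)
    (hord : Nat.Coprime (orderOf α) p)
    (hfix : ∀ x ∈ Subgroup.closure {x : P | x ^ (p ^ 2) = 1}, α x = x) :
    α = 1 := by
  exact aux_omega2 (Nat.card P) p hp hP le_rfl α hord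
    (fun y hy => hfix y (Subgroup.subset_closure hy))
end

section
/- Let C be a finite p-group of nilpotency class at most 2 with p odd. Then the subgroup Ω₁(C) generated by elements of order p has exponent p. -/
open scoped commutatorElement

private lemma pow_mul_comm_aux {C : Type*} [Group C]
    (hz : ∀ g h : C, ⁅g, h⁆ ∈ Subgroup.center C) (a b : C) :
    ∀ n : ℕ, b ^ n * a = a * b ^ n * ⁅b, a⁆ ^ n := by
  intro n
  induction n with
  | zero => simp
  | succ n ih =>
    have hcentral := Subgroup.mem_center_iff.mp (hz b a)
    have hba : b * a = a * b * ⁅b, a⁆ := by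
      have : b * a = ⁅b, a⁆ * (a * b) := by
        group
      rw [this, ← hcentral (a*b)]
    calc b ^ (n+1) * a = b * (b ^ n * a) := by rw [pow_succ']; group
      _ = b * (a * b ^ n * ⁅b, a⁆ ^ n) := by rw [ih]
      _ = (b * a) * (b ^ n * ⁅b, a⁆ ^ n) := by group
      _ = (a * b * ⁅b, a⁆) * (b ^ n * ⁅b, a⁆ ^ n) := by rw [hba]
      _ = a * b * (⁅b, a⁆ * b ^ n) * ⁅b, a⁆ ^ n := by group
      _ = a * b * (b ^ n * ⁅b, a⁆) * ⁅b, a⁆ ^ n := by rw [← hcentral (b^n)]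
      _ = a * (b * b ^ n) * (⁅b, a⁆ * ⁅b, a⁆ ^ n) := by simp [mul_assoc]
      _ = a * b ^ (n+1) * ⁅b, a⁆ ^ (n+1) := by rw [← pow_succ', ← pow_succ']

private lemma mul_pow_aux {C : Type*} [Group C]
    (hz : ∀ g h : C, ⁅g, h⁆ ∈ Subgroup.center C) (a b : C) :
    ∀ n : ℕ, (a * b) ^ n = a ^ n * b ^ n * ⁅b, a⁆ ^ n.choose 2 := by
  intro n
  induction n with
  | zero => simp
  | succ n ih =>
    have hcentral := Subgroup.mem_center_iff.mp (hz b a)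
    have hcpow : ∀ m : ℕ, ∀ c : C, ⁅b, a⁆ ^ m * c = c * ⁅b, a⁆ ^ m := by
      intro m c
      exact ((Subgroup.center C).pow_mem (hz b a) m).comm c |>.symm ▸
        (Subgroup.mem_center_iff.mp ((Subgroup.center C).pow_mem (hz b a) m) c)
    calc (a * b) ^ (n+1) = (a * b) ^ n * (a * b) := pow_succ _ _
      _ = a ^ n * b ^ n * ⁅b, a⁆ ^ n.choose 2 * (a * b) := by rw [ih]
      _ = a ^ n * b ^ n * (⁅b, a⁆ ^ n.choose 2 * a) * b := by group
      _ = a ^ n * b ^ n * (a * ⁅b, a⁆ ^ n.choose 2) * b := by rw [hcpow]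
      _ = a ^ n * (b ^ n * a) * (⁅b, a⁆ ^ n.choose 2 * b) := by group
      _ = a ^ n * (a * b ^ n * ⁅b, a⁆ ^ n) * (b * ⁅b, a⁆ ^ n.choose 2) := by
          rw [pow_mul_comm_aux hz a b n, hcpow]
      _ = a ^ (n+1) * b ^ (n+1) * (⁅b, a⁆ ^ n * ⁅b, a⁆ ^ n.choose 2) := by
          rw [pow_succ a, pow_succ b]
          rw [show a ^ n * (a * b ^ n * ⁅b, a⁆ ^ n) * (b * ⁅b, a⁆ ^ n.choose 2)
              = a ^ n * a * b ^ n * (⁅b, a⁆ ^ n * b) * ⁅b, a⁆ ^ n.choose 2 by group,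
            hcpow n b]
          group
      _ = a ^ (n+1) * b ^ (n+1) * ⁅b, a⁆ ^ (n+1).choose 2 := by
          rw [← pow_add, Nat.choose_succ_succ, Nat.choose_one_right]

theorem omega1_exponent_p_of_class_le_two {C : Type*} [Group C] [Finite C]
    (p : ℕ) (hp : p.Prime) (hodd : Odd p) (hC : IsPGroup p C)
    (hclass : commutator C ≤ Subgroup.center C) :
    ∀ x ∈ Subgroup.closure {x : C | x ^ p = 1}, x ^ p = 1 := by
  have hz : ∀ g h : C, ⁅g, h⁆ ∈ Subgroup.center C := fun g h =>
    hclass (Subgroup.commutator_mem_commutator (Subgroup.mem_top g) (Subgroup.mem_top h))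
  intro x hx
  induction hx using Subgroup.closure_induction with
  | mem y hy => exact hy
  | one => exact one_pow p
  | mul a b ha hb iha ihb =>
    -- z^p = 1 where z = ⁅b,a⁆
    have hzp : ⁅b, a⁆ ^ p = 1 := by
      have := pow_mul_comm_aux hz a b p
      rw [ihb] at this
      simpa using this.symm
    rw [mul_pow_aux hz a b p, iha, ihb]
    obtain ⟨k, hk⟩ := hodd
    have hpk : p - 1 = 2 * k := by omega
    have hchoose : p.choose 2 = p * k := by
      rw [Nat.choose_two_right, hpk, show p * (2*k) = (p*k)*2 by ring,
        Nat.mul_div_cancel _ (by norm_num)]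
    rw [hchoose, pow_mul, hzp, one_pow]
    simp
  | inv a ha iha =>
    rw [inv_pow, iha, inv_one]
end

section
/- Let C be a finite 2-group of nilpotency class at most 2 such that C/Z(C) is elementary abelian. Then the subgroup Ω₂(C), generated by all elements of order dividing 4, has exponent at most 4. -/
open scoped commutatorElement

theorem omega2_exponent_le_four {C : Type*} [Group C] [Finite C]
    (hC : IsPGroup 2 C) (hclass : commutator C ≤ Subgroup.center C)
    (helem : ∀ x : C, x ^ 2 ∈ Subgroup.center C) :
    ∀ x ∈ Subgroup.closure {x : C | x ^ 4 = 1}, x ^ 4 = 1 := by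
  have hcom : ∀ a b : C, ∀ g : C, ⁅a, b⁆ * g = g * ⁅a, b⁆ := by
    intro a b g
    have := hclass (Subgroup.commutator_mem_commutator (Subgroup.mem_top a)
      (Subgroup.mem_top b))
    exact (Subgroup.mem_center_iff.mp this g).symm
  have key : ∀ x y : C, x ^ 4 = 1 → y ^ 4 = 1 → (x * y) ^ 4 = 1 := by
    intro x y hx hy
    obtain ⟨c, hc⟩ : ∃ c : C, c = ⁅y, x⁆ := ⟨_, rfl⟩
    have hcc : ∀ g : C, c * g = g * c := by rw [hc]; exact hcom y x
    -- step 1 : (x*y)^2 = c * (x^2 * y^2)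
    have hyx : y * x = c * (x * y) := by
      rw [hc, commutatorElement_def]; group
    have hsq : (x * y) ^ 2 = c * (x ^ 2 * y ^ 2) := by
      have e0 : (x * y) ^ 2 = x * (y * x) * y := by
        rw [pow_two]; simp [mul_assoc]
      rw [e0, hyx]
      calc x * (c * (x * y)) * y = x * c * (x * y * y) := by simp [mul_assoc]
        _ = c * x * (x * y * y) := by rw [← hcc x]
        _ = c * (x ^ 2 * y ^ 2) := by rw [pow_two, pow_two]; simp [mul_assoc]
    -- step 2 : c^2 = 1
    have hc2 : c ^ 2 = 1 := by
      have h0 : ⁅y ^ 2, x⁆ = 1 :=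
        commutatorElement_eq_one_iff_commute.mpr
          ((Subgroup.mem_center_iff.mp (helem y) x).symm)
      have h1 : ⁅y ^ 2, x⁆ = y * c * (x * y⁻¹ * x⁻¹) := by
        rw [hc, pow_two, commutatorElement_def, commutatorElement_def]; group
      rw [← hcc y] at h1
      have h2 : c * y * (x * y⁻¹ * x⁻¹) = c * (y * x * y⁻¹ * x⁻¹) := by
        simp [mul_assoc]
      rw [h2, ← commutatorElement_def, ← hc] at h1
      rw [pow_two, ← h1, h0]
    -- conclude
    have hcommxy : Commute (x ^ 2) (y ^ 2) :=
      (Subgroup.mem_center_iff.mp (helem x) (y ^ 2)).symm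
    have hcxy : Commute c (x ^ 2 * y ^ 2) := hcc _
    rw [show (4 : ℕ) = 2 * 2 from rfl, pow_mul, hsq, hcxy.mul_pow,
      hcommxy.mul_pow, ← pow_mul, ← pow_mul]
    norm_num [hx, hy, hc2]
  intro x hx
  induction hx using Subgroup.closure_induction with
  | mem g hg => exact hg
  | one => simp
  | mul a b _ _ ha hb => exact key a b ha hb
  | inv a _ ha => rw [inv_pow, ha, inv_one]
end

section
/- Let G be a finite group and p a prime divisor of |G| with gcd(|G|, p-1) = 1. If the Sylow p-subgroups of G are cyclic, then G is p-nilpotent (G has a normal p-complement). -/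
/-- `G` is `p`-nilpotent: it has a normal `p`-complement, i.e. a normal
subgroup of order coprime to `p` and of `p`-power index. -/
def IsPNilpotent (p : ℕ) (G : Type*) [Group G] : Prop :=
  ∃ N : Subgroup G, N.Normal ∧ Nat.Coprime (Nat.card N) p ∧ ∃ k : ℕ, N.index = p ^ k

theorem pNilpotent_of_cyclic_sylow {G : Type*} [Group G] [Finite G]
    (p : ℕ) (hp : p.Prime) (hdvd : p ∣ Nat.card G)
    (hcop : Nat.gcd (Nat.card G) (p - 1) = 1)
    (hcyc : ∀ P : Sylow p G, IsCyclic (P : Subgroup G)) :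
    IsPNilpotent p G := by
  have : Fact p.Prime := ⟨hp⟩
  obtain ⟨P⟩ : Nonempty (Sylow p G) := inferInstance
  have hcycP : IsCyclic (P : Subgroup G) := hcyc P
  haveI : IsMulCommutative (P : Subgroup G) :=
    ⟨⟨letI := hcycP.commGroup; mul_comm⟩⟩
  obtain ⟨k, hk⟩ : ∃ k : ℕ, Nat.card (P : Subgroup G) = p ^ k := P.2.exists_card_eq
  -- the key step: N_G(P) ≤ C_G(P)
  have hP : Subgroup.normalizer ((P : Subgroup G) : Set G) ≤ Subgroup.centralizer (P : Set G) := by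
    set f := (P : Subgroup G).normalizerMonoidHom
    set d := f.ker.index with hd
    have hdvd1 : d ∣ Nat.card (MulAut (P : Subgroup G)) := by
      rw [hd, Subgroup.index_ker]
      exact Subgroup.card_subgroup_dvd_card f.range
    have hAut : Nat.card (MulAut (P : Subgroup G)) = Nat.totient (p ^ k) := by
      rw [IsCyclic.card_mulAut, hk]
    have htot : Nat.totient (p ^ k) ∣ p ^ k * (p - 1) := by
      cases k with
      | zero => simp
      | succ n =>
        rw [Nat.totient_prime_pow hp (Nat.succ_pos n)]
        exact mul_dvd_mul (pow_dvd_pow p (Nat.le_succ n)) dvd_rfl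
    -- p does not divide d
    have hPle : (P : Subgroup G).subgroupOf (Subgroup.normalizer ((P : Subgroup G) : Set G)) ≤ f.ker := by
      rw [Subgroup.normalizerMonoidHom_ker]
      intro x hx
      simp only [Subgroup.mem_subgroupOf] at hx ⊢
      exact Subgroup.le_centralizer (P : Subgroup G) hx
    have hpd : ¬ p ∣ d := by
      intro hpdvd
      have h1 : d ∣ ((P : Subgroup G).subgroupOf (Subgroup.normalizer ((P : Subgroup G) : Set G))).index :=
        Subgroup.index_dvd_of_le hPle
      have h2 : ((P : Subgroup G).subgroupOf (Subgroup.normalizer ((P : Subgroup G) : Set G))).index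
          = (P : Subgroup G).relIndex (Subgroup.normalizer ((P : Subgroup G) : Set G)) := rfl
      have h3 : (P : Subgroup G).relIndex (Subgroup.normalizer ((P : Subgroup G) : Set G)) ∣
          (P : Subgroup G).index :=
        Subgroup.relIndex_dvd_index_of_le Subgroup.le_normalizer
      exact P.not_dvd_index (hpdvd.trans ((h1.trans (h2 ▸ h3))))
    -- d divides card G
    have hdG : d ∣ Nat.card G := by
      have h1 : d ∣ Nat.card (Subgroup.normalizer ((P : Subgroup G) : Set G)) := Subgroup.index_dvd_card _
      exact h1.trans (Subgroup.card_subgroup_dvd_card _)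
    -- d divides p - 1
    have hd1 : d ∣ p - 1 := by
      have : d ∣ p ^ k * (p - 1) := hdvd1.trans (hAut ▸ htot)
      exact (Nat.Coprime.pow_right k ((Nat.Prime.coprime_iff_not_dvd hp).mpr hpd).symm).dvd_of_dvd_mul_left this
    have hd_one : d = 1 := Nat.eq_one_of_dvd_coprimes hcop hdG hd1
    have hker : f.ker = ⊤ := Subgroup.index_eq_one.mp hd_one
    rw [Subgroup.normalizerMonoidHom_ker] at hker
    exact Subgroup.subgroupOf_eq_top.mp hker
  -- Burnside's transfer theorem
  refine ⟨(MonoidHom.transferSylow P hP).ker, MonoidHom.normal_ker _, ?_, k, ?_⟩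
  · exact ((Nat.Prime.coprime_iff_not_dvd hp).mpr
      (MonoidHom.not_dvd_card_ker_transferSylow P hP)).symm
  · rw [(MonoidHom.ker_transferSylow_isComplement' P hP).symm.index_eq_card, hk]
end

section
/- Let G be a finite group, p a prime divisor of |G| with gcd(|G|, p-1) = 1, and E a normal subgroup of G such that the p-part of |E| is at most p and G/E is p-nilpotent. Then G is p-nilpotent. -/
/-- In a finite group whose `p`-part is at most `p` and with `gcd(|H|, p-1) = 1`,
the set of `p'`-elements forms a normal `p`-complement. -/
lemma exists_pComplement {p : ℕ} (hp : p.Prime) {H : Type*} [Group H] [Finite H]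
    (h1 : (Nat.card H).factorization p ≤ 1)
    (h2 : Nat.gcd (Nat.card H) (p - 1) = 1) :
    ∃ K : Subgroup H, (∀ x : H, x ∈ K ↔ ¬ p ∣ orderOf x) ∧
      Nat.Coprime (Nat.card K) p ∧ ∃ k : ℕ, K.index = p ^ k := by
  by_cases hpd : p ∣ Nat.card H
  · -- p-part is exactly p; take a Sylow, apply Burnside
    haveI : Fact p.Prime := ⟨hp⟩
    obtain ⟨P⟩ : Nonempty (Sylow p H) := inferInstance
    have hcardP : Nat.card P = p := by
      rw [Sylow.card_eq_multiplicity]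
      have h1' : (Nat.card H).factorization p = 1 := by
        refine le_antisymm h1 ?_
        have := (Nat.Prime.dvd_iff_one_le_factorization hp Nat.card_pos.ne').mp hpd
        exact this
      rw [h1', pow_one]
    have hPc : IsCyclic P := isCyclic_of_prime_card hcardP
    -- normalizer ≤ centralizer
    have hP : Subgroup.normalizer (P : Set H) ≤ Subgroup.centralizer (P : Set H) := by
      have hker : (P : Subgroup H).normalizerMonoidHom.ker.index = 1 := by
        have d1 : (P : Subgroup H).normalizerMonoidHom.ker.index ∣ p - 1 := by
          rw [Subgroup.index_ker]
          have : Nat.card (P : Subgroup H).normalizerMonoidHom.range ∣ Nat.card (MulAut P) :=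
            Subgroup.card_subgroup_dvd_card _
          rwa [IsCyclic.card_mulAut, hcardP, Nat.totient_prime hp] at this
        have d2 : (P : Subgroup H).normalizerMonoidHom.ker.index ∣ Nat.card H :=
          (Subgroup.index_dvd_card _).trans (Subgroup.card_subgroup_dvd_card _)
        exact Nat.eq_one_of_dvd_coprimes h2 d2 d1
      have := Subgroup.index_eq_one.mp hker
      rw [Subgroup.normalizerMonoidHom_ker] at this
      exact Subgroup.subgroupOf_eq_top.mp this
    set K := (MonoidHom.transferSylow P hP).ker with hK
    have hcompl := MonoidHom.ker_transferSylow_isComplement' P hP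
    have hnd : ¬ p ∣ Nat.card K := MonoidHom.not_dvd_card_ker_transferSylow P hP
    have hidx : K.index = p := by
      rw [hcompl.symm.index_eq_card, hcardP]
    refine ⟨K, ?_, (hp.coprime_iff_not_dvd.mpr hnd).symm, 1, by rw [hidx, pow_one]⟩
    intro x
    constructor
    · intro hx hdvd
      have : orderOf (⟨x, hx⟩ : K) = orderOf x := Subgroup.orderOf_mk x hx
      have h3 : orderOf (⟨x, hx⟩ : K) ∣ Nat.card K := orderOf_dvd_natCard _
      rw [this] at h3
      exact hnd (hdvd.trans h3)
    · intro hx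
      have hnorm : K.Normal := MonoidHom.normal_ker _
      rw [← QuotientGroup.eq_one_iff]
      have ho1 : orderOf ((x : H) : H ⧸ K) ∣ orderOf x := orderOf_map_dvd (QuotientGroup.mk' K) x
      have ho2 : orderOf ((x : H) : H ⧸ K) ∣ p := by
        have : orderOf ((x : H) : H ⧸ K) ∣ Nat.card (H ⧸ K) := orderOf_dvd_natCard _
        rwa [← Subgroup.index_eq_card, hidx] at this
      rcases (Nat.dvd_prime hp).mp ho2 with h | h
      · exact orderOf_eq_one_iff.mp h
      · exact absurd (h ▸ ho1) hx
  · -- p does not divide |H|: the whole group works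
    refine ⟨⊤, ?_, ?_, 0, by rw [pow_zero, Subgroup.index_top]⟩
    · intro x
      simp only [Subgroup.mem_top, true_iff]
      intro hdvd
      exact hpd (hdvd.trans (orderOf_dvd_natCard x))
    · rw [Nat.card_congr (Subgroup.topEquiv.toEquiv)]
      exact (hp.coprime_iff_not_dvd.mpr hpd).symm


theorem pNilpotent_of_quotient {G : Type*} [Group G] [Finite G]
    (p : ℕ) (hp : p.Prime) (hdvd : p ∣ Nat.card G)
    (hcop : Nat.gcd (Nat.card G) (p - 1) = 1)
    (E : Subgroup G) [E.Normal] (hEp : (Nat.card E).factorization p ≤ 1)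
    (hquot : IsPNilpotent p (G ⧸ E)) :
    IsPNilpotent p G := by
  obtain ⟨N', hN'norm, hN'cop, k, hN'idx⟩ := hquot
  set π := QuotientGroup.mk' E with hπ
  set N : Subgroup G := N'.comap π with hN
  haveI hNnorm : N.Normal := hN'norm.comap π
  have hEN : E ≤ N := fun x hx => by
    show π x ∈ N'
    have : π x = 1 := (QuotientGroup.eq_one_iff x).mpr hx
    rw [this]; exact N'.one_mem
  have hNidx : N.index = p ^ k := by
    exact (Subgroup.index_comap_of_surjective N' (QuotientGroup.mk'_surjective E)).trans hN'idx
  -- the restriction of π to N, landing in N'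
  let φ : N →* N' := (π.domRestrict N).codRestrict N' (fun x => x.2)
  have hφker : φ.ker = E.subgroupOf N := by
    ext x
    simp only [MonoidHom.mem_ker, φ, MonoidHom.codRestrict_apply, Subtype.ext_iff,
      MonoidHom.restrict_apply, Subgroup.mem_subgroupOf]
    rw [Subgroup.coe_one, ← QuotientGroup.eq_one_iff (x : G)]
    rfl
  have hcardN : Nat.card N ∣ Nat.card N' * Nat.card E := by
    have h1 : Nat.card N = Nat.card (N ⧸ φ.ker) * Nat.card φ.ker :=
      Subgroup.card_eq_card_quotient_mul_card_subgroup φ.ker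
    have h2 : Nat.card (N ⧸ φ.ker) = Nat.card φ.range :=
      Nat.card_congr (QuotientGroup.quotientKerEquivRange φ).toEquiv
    have h3 : Nat.card φ.range ∣ Nat.card N' := Subgroup.card_subgroup_dvd_card _
    have h4 : Nat.card φ.ker = Nat.card E := by
      rw [hφker]
      exact Nat.card_congr (Subgroup.subgroupOfEquivOfLe hEN).toEquiv
    rw [h1, h2, h4]
    exact Nat.mul_dvd_mul h3 dvd_rfl
  have hNfact : (Nat.card N).factorization p ≤ 1 := by
    calc (Nat.card N).factorization p
        ≤ (Nat.card N' * Nat.card E).factorization p := by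
          have hpos : 0 < Nat.card N' * Nat.card E :=
            Nat.mul_pos Nat.card_pos Nat.card_pos
          exact (Nat.factorization_le_iff_dvd Nat.card_pos.ne' hpos.ne').mpr hcardN p
      _ = (Nat.card N').factorization p + (Nat.card E).factorization p := by
          rw [Nat.factorization_mul Nat.card_pos.ne' Nat.card_pos.ne']; rfl
      _ ≤ 1 := by
          have : (Nat.card N').factorization p = 0 :=
            Nat.factorization_eq_zero_of_not_dvd
              (hp.coprime_iff_not_dvd.mp hN'cop.symm)
          omega
  have hNgcd : Nat.gcd (Nat.card N) (p - 1) = 1 := by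
    have : Nat.gcd (Nat.card N) (p - 1) ∣ Nat.gcd (Nat.card G) (p - 1) :=
      Nat.gcd_dvd_gcd_of_dvd_left _ (Subgroup.card_subgroup_dvd_card N)
    rw [hcop] at this
    exact Nat.eq_one_of_dvd_one this
  obtain ⟨K, hKmem, hKcop, k', hKidx⟩ := exists_pComplement hp hNfact hNgcd
  refine ⟨K.map N.subtype, ?_, ?_, k' + k, ?_⟩
  · constructor
    intro n hn g
    obtain ⟨x, hxK, rfl⟩ := hn
    have hgN : g * (x : G) * g⁻¹ ∈ N := hNnorm.conj_mem _ x.2 g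
    refine ⟨⟨g * (x : G) * g⁻¹, hgN⟩, ?_, rfl⟩
    show (⟨g * (x : G) * g⁻¹, hgN⟩ : N) ∈ K
    rw [hKmem, Subgroup.orderOf_mk]
    have hconj : orderOf (g * (x : G) * g⁻¹) = orderOf (x : G) := by
      have := (MulAut.conj g).orderOf_eq (x : G)
      simpa [MulAut.conj_apply] using this
    rw [hconj, Subgroup.orderOf_coe]
    exact (hKmem x).mp hxK
  · rwa [Nat.card_congr (K.equivMapOfInjective N.subtype N.subtype_injective).toEquiv] at hKcop
  · have hle : K.map N.subtype ≤ N := Subgroup.map_subtype_le K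
    have hrel : (K.map N.subtype).relIndex N = K.index := by
      rw [Subgroup.relIndex, Subgroup.subgroupOf,
        Subgroup.comap_map_eq_self_of_injective N.subtype_injective]
    rw [← Subgroup.relIndex_mul_index hle, hrel, hKidx, hNidx, ← pow_add]
end

section
/- Let G be a finite group and P a Sylow p-subgroup of G with gcd(|G|, p-1) = 1. If every subgroup of P of order p has a complement in G, then G is p-nilpotent. -/
open scoped Pointwise

open Subgroup

universe u


/-- N/C lemma: if `C` has prime order `p` and `|W|` is coprime to `p-1`,
then the normalizer of `C` is contained in its centralizer. -/
lemma normalizer_le_centralizer_of_card_eq_prime {W : Type*} [Group W] [Finite W]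
    {p : ℕ} (hp : p.Prime) {C : Subgroup W} (hC : Nat.card C = p)
    (hcop : Nat.Coprime (Nat.card W) (p - 1)) :
    Subgroup.normalizer (C : Set W) ≤ Subgroup.centralizer (C : Set W) := by
  have : Fact p.Prime := ⟨hp⟩
  have hcyc : IsCyclic C := isCyclic_of_prime_card hC
  have hAut : Nat.card (MulAut C) = p - 1 := by
    rw [IsCyclic.card_mulAut, hC, Nat.totient_prime hp]
  set f := C.normalizerMonoidHom
  have h1 : Nat.card f.range ∣ p - 1 := hAut ▸ Subgroup.card_subgroup_dvd_card f.range
  have h2 : Nat.card f.range ∣ Nat.card W := by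
    have := Nat.card_congr (QuotientGroup.quotientKerEquivRange f).toEquiv
    calc Nat.card f.range = Nat.card (Subgroup.normalizer (C : Set W) ⧸ f.ker) := this.symm
    _ ∣ Nat.card (Subgroup.normalizer (C : Set W)) := Subgroup.card_quotient_dvd_card _
    _ ∣ Nat.card W := Subgroup.card_subgroup_dvd_card _
  have hone : Nat.card f.range = 1 := Nat.eq_one_of_dvd_coprimes hcop h2 h1
  have hbot : f.range = ⊥ := Subgroup.card_eq_one.mp hone
  have hker : f.ker = ⊤ := (Subgroup.eq_top_iff' f.ker).mpr fun x => by
    have hx : f x ∈ f.range := ⟨x, rfl⟩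
    rw [hbot, Subgroup.mem_bot] at hx
    exact hx
  rw [Subgroup.normalizerMonoidHom_ker] at hker
  exact (Subgroup.subgroupOf_eq_top.mp hker)

lemma isComplement'_map_mulEquiv {G : Type*} [Group G] {H K : Subgroup G} (e : G ≃* G)
    (h : IsComplement' H K) :
    IsComplement' (H.map e.toMonoidHom) (K.map e.toMonoidHom) := by
  apply isComplement'_of_disjoint_and_mul_eq_univ
  · rw [disjoint_iff, ← Subgroup.map_inf _ _ _ e.injective, disjoint_iff.mp h.disjoint,
      Subgroup.map_bot]
  · have hm : (H : Set G) * (K : Set G) = Set.univ := (isComplement'_def.mp h).mul_eq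
    rw [Subgroup.coe_map, Subgroup.coe_map, ← Set.image_mul e.toMonoidHom, hm, Set.image_univ,
      MulEquiv.coe_toMonoidHom, e.surjective.range_eq]

lemma map_symm_map {G : Type*} [Group G] (e : G ≃* G) (H : Subgroup G) :
    (H.map e.toMonoidHom).map e.symm.toMonoidHom = H := by
  ext x
  simp [Subgroup.mem_map]

lemma exists_isComplement'_of_card_eq_p {G : Type*} [Group G] [Finite G] {p : ℕ} (hp : p.Prime)
    (P : Sylow p G)
    (hcomp : ∀ H : Subgroup G, H ≤ (P : Subgroup G) → Nat.card H = p →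
      ∃ T : Subgroup G, (H : Set G) * (T : Set G) = (Set.univ : Set G) ∧ H ⊓ T = ⊥)
    (H : Subgroup G) (hH : Nat.card H = p) : ∃ T, IsComplement' H T := by
  have : Fact p.Prime := ⟨hp⟩
  have hpg : IsPGroup p H := IsPGroup.of_card (by rw [hH, pow_one])
  obtain ⟨Q, hQ⟩ := hpg.exists_le_sylow
  obtain ⟨g, hg⟩ := MulAction.exists_smul_eq G Q P
  set e := MulAut.conj g with he
  have hle : H.map e.toMonoidHom ≤ (P : Subgroup G) := by
    rw [← hg, Sylow.coe_subgroup_smul, Subgroup.pointwise_smul_def]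
    exact Subgroup.map_mono hQ
  have hcard : Nat.card (H.map e.toMonoidHom) = p := by
    rw [← hH]
    exact (Nat.card_congr (H.equivMapOfInjective e.toMonoidHom e.injective).toEquiv).symm
  obtain ⟨T, hT1, hT2⟩ := hcomp _ hle hcard
  have hc : IsComplement' (H.map e.toMonoidHom) T :=
    isComplement'_of_disjoint_and_mul_eq_univ (disjoint_iff.mpr hT2) hT1
  refine ⟨T.map e.symm.toMonoidHom, ?_⟩
  have h2 := isComplement'_map_mulEquiv e.symm hc
  rwa [map_symm_map] at h2

lemma complemented_of_le {G : Type*} [Group G] (T' : Subgroup G) {p : ℕ}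
    (h : ∀ H : Subgroup G, Nat.card H = p → ∃ S, IsComplement' H S)
    (K : Subgroup ↥T') (hK : Nat.card K = p) : ∃ S, IsComplement' K S := by
  have hcard : Nat.card (K.map T'.subtype) = p := by
    rw [← hK]
    exact (Nat.card_congr (K.equivMapOfInjective T'.subtype T'.subtype_injective).toEquiv).symm
  obtain ⟨S, hS⟩ := h (K.map T'.subtype) hcard
  refine ⟨S.subgroupOf T', isComplement'_of_disjoint_and_mul_eq_univ ?_ ?_⟩
  · rw [disjoint_iff, eq_bot_iff]
    intro x hx
    obtain ⟨hx1, hx2⟩ := Subgroup.mem_inf.mp hx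
    have h1 : (x : G) ∈ (K.map T'.subtype) ⊓ S :=
      ⟨⟨x, hx1, rfl⟩, (Subgroup.mem_subgroupOf.mp hx2)⟩
    rw [disjoint_iff.mp hS.disjoint, Subgroup.mem_bot] at h1
    have : x = 1 := Subtype.ext (by simpa using h1)
    simp [this]
  · ext t
    simp only [Set.mem_univ, iff_true]
    have hm : ((K.map T'.subtype : Subgroup G) : Set G) * (S : Set G) = Set.univ :=
      (isComplement'_def.mp hS).mul_eq
    have ht : (t : G) ∈ ((K.map T'.subtype : Subgroup G) : Set G) * (S : Set G) := by
      rw [hm]; trivial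
    obtain ⟨a, ha, b, hb, hab⟩ := Set.mem_mul.mp ht
    obtain ⟨k, hk, hka⟩ := ha
    have hab' : (k : G) * b = (t : G) := by rw [← hka] at hab; exact hab
    have hbT : b ∈ T' := by
      rw [eq_inv_mul_iff_mul_eq.mpr hab']
      exact mul_mem (inv_mem k.2) t.2
    refine Set.mem_mul.mpr ⟨k, hk, ⟨b, hbT⟩, Subgroup.mem_subgroupOf.mpr hb, ?_⟩
    exact Subtype.ext hab'

/-- If `T'` is a normal subgroup of `G` and `N ≤ T'` is a normal `p`-complement of `T'`,
then the image of `N` in `G` is exactly the set of elements of `T'` of order coprime to `p`. -/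
lemma mem_map_pComplement {G : Type*} [Group G] [Finite G] {p : ℕ}
    {T' : Subgroup G} {N : Subgroup ↥T'} [N.Normal]
    (hNcop : Nat.Coprime (Nat.card N) p) {k : ℕ} (hNidx : N.index = p ^ k) (x : G) :
    x ∈ N.map T'.subtype ↔ x ∈ T' ∧ Nat.Coprime (orderOf x) p := by
  constructor
  · rintro ⟨y, hy, rfl⟩
    refine ⟨y.2, ?_⟩
    have h1 : orderOf (T'.subtype y) = orderOf y :=
      orderOf_injective T'.subtype T'.subtype_injective y
    have h2 : orderOf y ∣ Nat.card N := Subgroup.orderOf_dvd_natCard N hy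
    rw [h1]
    exact Nat.Coprime.coprime_dvd_left h2 hNcop
  · rintro ⟨hxT, hord⟩
    set y : ↥T' := ⟨x, hxT⟩ with hy
    have hyx : orderOf y = orderOf x := (orderOf_injective T'.subtype T'.subtype_injective y).symm
    set q := QuotientGroup.mk' N
    have h1 : orderOf (q y) ∣ orderOf x := hyx ▸ orderOf_map_dvd q y
    have h2 : orderOf (q y) ∣ p ^ k := by
      have := orderOf_dvd_natCard (q y)
      rwa [Nat.card_congr (Equiv.refl _), ← Subgroup.index, hNidx] at this
    have hcop : Nat.Coprime (orderOf x) (p ^ k) := hord.pow_right k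
    have : orderOf (q y) = 1 := Nat.eq_one_of_dvd_coprimes hcop h1 h2
    have hyN : y ∈ N := by
      rw [← QuotientGroup.ker_mk' N]
      exact orderOf_eq_one_iff.mp this
    exact ⟨y, hyN, rfl⟩

lemma pNilpotent_of_normal {G : Type*} [Group G] [Finite G] {p : ℕ}
    (T' : Subgroup G) [hT : T'.Normal] {m : ℕ} (hidx : T'.index = p ^ m)
    (h : IsPNilpotent p ↥T') : IsPNilpotent p G := by
  obtain ⟨N, hN, hNcop, k, hNidx⟩ := h
  haveI := hN
  refine ⟨N.map T'.subtype, ?_, ?_, ?_⟩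
  · constructor
    intro n hn g
    rw [mem_map_pComplement hNcop hNidx] at hn ⊢
    refine ⟨hT.conj_mem _ hn.1 g, ?_⟩
    have horder : orderOf (g * n * g⁻¹) = orderOf n := by
      have := orderOf_injective (MulAut.conj g).toMonoidHom (MulEquiv.injective _) n
      simpa [MulAut.conj_apply] using this
    rw [horder]
    exact hn.2
  · have : Nat.card (N.map T'.subtype) = Nat.card N :=
      (Nat.card_congr (N.equivMapOfInjective T'.subtype T'.subtype_injective).toEquiv).symm
    rw [this]
    exact hNcop
  · refine ⟨k + m, ?_⟩
    have hle : N.map T'.subtype ≤ T' := map_subtype_le N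
    have h1 := Subgroup.relIndex_mul_index hle
    have h2 : (N.map T'.subtype).relIndex T' = p ^ k := by
      rw [Subgroup.relIndex, Subgroup.subgroupOf, Subgroup.comap_map_eq_self_of_injective
        T'.subtype_injective, hNidx]
    rw [← h1, h2, hidx, pow_add]

lemma aux_induction {p : ℕ} (hp : p.Prime) :
    ∀ (n : ℕ) (G : Type u) [Group G] [Finite G],
      Nat.card G ≤ n → Nat.Coprime (Nat.card G) (p - 1) →
      (∀ H : Subgroup G, Nat.card H = p → ∃ T, IsComplement' H T) →
      IsPNilpotent p G := by
  intro n
  induction n with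
  | zero =>
    intro G _ _ hle _ _
    have := Nat.card_pos (α := G)
    omega
  | succ n ih =>
    intro G _ _ hle hcop hcomp
    have hfact : Fact p.Prime := ⟨hp⟩
    by_cases hdvd : p ∣ Nat.card G
    · -- main case
      obtain ⟨g, hg⟩ := exists_prime_orderOf_dvd_card' p hdvd
      have hHcard : Nat.card (Subgroup.zpowers g) = p := by rw [Nat.card_zpowers, hg]
      obtain ⟨T, hT⟩ := hcomp (Subgroup.zpowers g) hHcard
      have hTidx : T.index = p := by rw [hT.index_eq_card, hHcard]
      set f := MulAction.toPermHom G (G ⧸ T) with hf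
      set W := f.range with hW
      have hWcard_dvd : Nat.card W ∣ Nat.card G := by
        rw [← Subgroup.index_ker]; exact Subgroup.index_dvd_card _
      have hpW : p ∣ Nat.card W := by
        rw [← Subgroup.index_ker, ← Subgroup.normalCore_eq_ker]
        exact hTidx ▸ Subgroup.index_dvd_of_le T.normalCore_le
      have hqcard : Nat.card (G ⧸ T) = p := hTidx
      have hp2W : ¬ p ^ 2 ∣ Nat.card W := by
        intro hdvd2
        have h1 : Nat.card W ∣ Nat.card (Equiv.Perm (G ⧸ T)) :=
          Subgroup.card_subgroup_dvd_card W
        have hperm : Nat.card (Equiv.Perm (G ⧸ T)) = Nat.factorial p := by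
          letI : DecidableEq (G ⧸ T) := Classical.decEq _
          letI : Fintype (G ⧸ T) := Fintype.ofFinite _
          rw [Nat.card_eq_fintype_card, Fintype.card_perm, ← Nat.card_eq_fintype_card, hqcard]
        have h2 : p ^ 2 ∣ Nat.factorial p := hperm ▸ hdvd2.trans h1
        have h3 : p * p ∣ p * Nat.factorial (p - 1) := by
          rwa [Nat.mul_factorial_pred hp.ne_zero, ← sq]
        have h4 : p ∣ Nat.factorial (p - 1) :=
          (mul_dvd_mul_iff_left hp.pos.ne').mp h3
        have h5 : p ≤ p - 1 := (Nat.Prime.dvd_factorial hp).mp h4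
        have := hp.two_le
        omega
      have hW0 : Nat.card W ≠ 0 := Nat.card_pos.ne'
      set C : Sylow p W := default with hC
      have hCcard : Nat.card C = p := by
        rw [Sylow.card_eq_multiplicity]
        have hge : 1 ≤ (Nat.card W).factorization p :=
          (Nat.Prime.pow_dvd_iff_le_factorization hp hW0).mp (by simpa using hpW)
        have hlt : (Nat.card W).factorization p < 2 := by
          by_contra h
          push_neg at h
          exact hp2W ((Nat.Prime.pow_dvd_iff_le_factorization hp hW0).mpr h)
        have : (Nat.card W).factorization p = 1 := by omega
        rw [this, pow_one]
      have hWcop : Nat.Coprime (Nat.card W) (p - 1) :=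
        Nat.Coprime.coprime_dvd_left hWcard_dvd hcop
      have hNC := normalizer_le_centralizer_of_card_eq_prime hp hCcard hWcop
      have hcompl := MonoidHom.ker_transferSylow_isComplement' C hNC
      set M := (MonoidHom.transferSylow C hNC).ker with hM
      have hMidx : M.index = p := by rw [hcompl.symm.index_eq_card, hCcard]
      set T' := M.comap f.rangeRestrict with hT'
      haveI hT'norm : T'.Normal := Subgroup.normal_comap _
      have hT'idx : T'.index = p := by
        rw [hT', Subgroup.index_comap_of_surjective _ f.rangeRestrict_surjective, hMidx]
      have hT'le : Nat.card T' ≤ n := by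
        have h1 : Nat.card T' * T'.index = Nat.card G := T'.card_mul_index
        have h2 : 0 < Nat.card T' := Nat.card_pos
        have h3 : 2 ≤ p := hp.two_le
        rw [hT'idx] at h1
        nlinarith
      have hT'cop : Nat.Coprime (Nat.card T') (p - 1) :=
        Nat.Coprime.coprime_dvd_left (Subgroup.card_subgroup_dvd_card T') hcop
      have hres := ih ↥T' hT'le hT'cop (complemented_of_le T' hcomp)
      exact pNilpotent_of_normal T' (m := 1) (by rw [hT'idx, pow_one]) hres
    · refine ⟨⊤, inferInstance, ?_, 0, by rw [Subgroup.index_top, pow_zero]⟩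
      have : Nat.card (⊤ : Subgroup G) = Nat.card G :=
        Nat.card_congr Subgroup.topEquiv.toEquiv
      rw [this]
      exact (hp.coprime_iff_not_dvd.mpr hdvd).symm

theorem pNilpotent_of_complemented_order_p {G : Type*} [Group G] [Finite G]
    (p : ℕ) (hp : p.Prime) (hcop : Nat.gcd (Nat.card G) (p - 1) = 1)
    (P : Sylow p G)
    (hcomp : ∀ H : Subgroup G, H ≤ (P : Subgroup G) → Nat.card H = p →
      ∃ T : Subgroup G, (H : Set G) * (T : Set G) = (Set.univ : Set G) ∧ H ⊓ T = ⊥) :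
    IsPNilpotent p G := by
  exact aux_induction hp (Nat.card G) G le_rfl hcop
    (exists_isComplement'_of_card_eq_p hp P hcomp)
end

section
/- Let G be a finite group, P a normal p-subgroup of G, and suppose that every proper subgroup H of P with |H| = 1 or |H| = p, and (if p = 2 and P is not quaternion-free) every cyclic subgroup of P of order 4, either is Π-supplemented in G or has a p-supersoluble supplement in G. If moreover P is elementary abelian, then P is contained in the supersoluble hypercentre Z_𝒰(G). -/
open scoped Pointwise

/-- A group is quaternion-free if no section is isomorphic to ;
equivalently, no subgroup maps onto . -/
def QuaternionFree (G : Type*) [Group G] : Prop :=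
  ∀ (H : Subgroup G) (f : H →* QuaternionGroup 2), ¬ Function.Surjective f

/-- A finite group is -supersoluble iff every chief factor has order 
or order coprime to . -/
def IsPSupersoluble (p : ℕ) (G : Type*) [Group G] : Prop :=
  ∀ K L : Subgroup G, IsChiefFactor G K L →
    K.relIndex L = p ∨ Nat.Coprime (K.relIndex L) p

section MyHelpers

variable {G : Type*} [Group G]

lemma myCardMapMk' (K L : Subgroup G) [K.Normal] :
    Nat.card (Subgroup.map (QuotientGroup.mk' K) L) = K.relIndex L := by
  have h1 : Subgroup.map (QuotientGroup.mk' K) L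
      = ((QuotientGroup.mk' K).comp L.subtype).range := by
    rw [MonoidHom.range_comp, Subgroup.range_subtype]
  have h2 : ((QuotientGroup.mk' K).comp L.subtype).ker = K.subgroupOf L := by
    rw [← MonoidHom.comap_ker, QuotientGroup.ker_mk']
    rfl
  rw [h1, Subgroup.relIndex, Subgroup.index_eq_card, ← h2,
    ← Nat.card_congr (QuotientGroup.quotientKerEquivRange _).toEquiv]

lemma myExistsCenterInter {p : ℕ} [hp : Fact p.Prime] [Finite G] (hG : IsPGroup p G)
    (W : Subgroup G) [W.Normal] (hW : W ≠ ⊥) :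
    ∃ w : G, w ∈ W ∧ w ≠ 1 ∧ w ∈ Subgroup.center G := by
  have hC : IsPGroup p (ConjAct G) := hG.of_equiv ConjAct.toConjAct
  have hpW : p ∣ Nat.card W := by
    obtain ⟨n, hn⟩ := (IsPGroup.iff_card).1 (hG.to_subgroup W)
    rcases n with _ | n
    · exact absurd (Subgroup.card_eq_one.mp (by simpa using hn)) hW
    · exact hn ▸ dvd_pow_self p (Nat.succ_ne_zero n)
  have h1 : (1 : W) ∈ MulAction.fixedPoints (ConjAct G) W := fun g => smul_one g
  obtain ⟨b, hb, hb1⟩ :=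
    hC.exists_fixed_point_of_prime_dvd_card_of_fixed_point (α := ↥W) hpW h1
  refine ⟨(b : G), b.2, fun h => hb1 (Subtype.ext h.symm), ?_⟩
  rw [Subgroup.mem_center_iff]
  intro g
  have h2 := hb (ConjAct.toConjAct g)
  have h3 := congrArg Subtype.val h2
  rw [ConjAct.Subgroup.val_conj_smul, ConjAct.smul_def, ConjAct.ofConjAct_toConjAct] at h3
  calc g * b = (g * b * g⁻¹) * g := by group
  _ = b * g := by rw [h3]

end MyHelpers

section MyKey

lemma myKey {G : Type*} [Group G] [Finite G]
    (p : ℕ) (hp : p.Prime) (P : Subgroup G) [P.Normal] (hPp : IsPGroup p P)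
    (hexp : ∀ x ∈ P, x ^ p = 1) (hcomm : ∀ x ∈ P, ∀ y ∈ P, x * y = y * x)
    (h1 : ∀ H : Subgroup G, H < P → (Nat.card H = 1 ∨ Nat.card H = p) →
      PiSupplemented G H ∨
        ∃ T : Subgroup G, (H : Set G) * (T : Set G) = (Set.univ : Set G) ∧
          IsPSupersoluble p T) :
    ∀ n : ℕ, ∀ L K : Subgroup G, Nat.card L ≤ n → IsChiefFactor G K L → L ≤ P →
      ∃ q : ℕ, q.Prime ∧ K.relIndex L = q := by
  haveI : Fact p.Prime := ⟨hp⟩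
  intro n
  induction n with
  | zero =>
    intro L K hn _ _
    have := Nat.card_pos (α := ↥L)
    omega
  | succ n ih =>
    intro L K hn hchief hLP
    obtain ⟨hKn, hLn, hKL, hmin⟩ := hchief
    haveI hKi : K.Normal := hKn
    haveI hLi : L.Normal := hLn
    have hVrel : K.relIndex L = Nat.card (Subgroup.map (QuotientGroup.mk' K) L) :=
      (myCardMapMk' K L).symm
    suffices hsuff : ∃ q : ℕ, q.Prime ∧
        Nat.card (Subgroup.map (QuotientGroup.mk' K) L) = q by
      obtain ⟨q, hq, h⟩ := hsuff
      exact ⟨q, hq, hVrel.trans h⟩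
    haveI hVn : (Subgroup.map (QuotientGroup.mk' K) L).Normal :=
      hLn.map _ (QuotientGroup.mk'_surjective K)
    have hVp : IsPGroup p (Subgroup.map (QuotientGroup.mk' K) L) :=
      (hPp.to_le hLP).map _
    obtain ⟨S, hVS⟩ := hVp.exists_le_sylow
    haveI hWn : ((Subgroup.map (QuotientGroup.mk' K) L).subgroupOf S).Normal :=
      hVn.comap _
    -- a nontrivial element of V
    obtain ⟨y, hyL, hyK⟩ := SetLike.exists_of_lt hKL
    have hyV : QuotientGroup.mk' K y ∈ Subgroup.map (QuotientGroup.mk' K) L :=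
      ⟨y, hyL, rfl⟩
    have hy1 : QuotientGroup.mk' K y ≠ 1 := by
      intro h
      exact hyK ((QuotientGroup.eq_one_iff y).mp h)
    have hWne : (Subgroup.map (QuotientGroup.mk' K) L).subgroupOf S ≠ ⊥ := by
      intro hbot
      have hmem : (⟨QuotientGroup.mk' K y, hVS hyV⟩ : ↥(S : Subgroup (G ⧸ K)))
          ∈ (Subgroup.map (QuotientGroup.mk' K) L).subgroupOf S := hyV
      rw [hbot, Subgroup.mem_bot] at hmem
      exact hy1 (congrArg Subtype.val hmem)
    obtain ⟨w, hwW, hw1, hwZ⟩ := myExistsCenterInter S.isPGroup'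
      ((Subgroup.map (QuotientGroup.mk' K) L).subgroupOf S) hWne
    have hxbV : (w : G ⧸ K) ∈ Subgroup.map (QuotientGroup.mk' K) L := hwW
    have hxb1 : (w : G ⧸ K) ≠ 1 := fun h => hw1 (Subtype.ext h)
    have hcent : ∀ s ∈ (S : Subgroup (G ⧸ K)), s * (w : G ⧸ K) = (w : G ⧸ K) * s := by
      intro s hs
      have := (Subgroup.mem_center_iff.mp hwZ) ⟨s, hs⟩
      exact congrArg Subtype.val this
    obtain ⟨x, hxL, hxπ⟩ := Subgroup.mem_map.mp hxbV
    have hxK : x ∉ K := by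
      intro h
      exact hxb1 (hxπ ▸ (QuotientGroup.eq_one_iff x).mpr h)
    have hx1 : x ≠ 1 := fun h => hxK (h ▸ K.one_mem)
    have hxP : x ∈ P := hLP hxL
    have hHle : Subgroup.zpowers x ≤ L := Subgroup.zpowers_le.mpr hxL
    have hordx : orderOf x = p := orderOf_eq_prime (hexp x hxP) hx1
    have hcardH : Nat.card (Subgroup.zpowers x) = p := by
      rw [Nat.card_zpowers, hordx]
    have hmapH : Subgroup.map (QuotientGroup.mk' K) (Subgroup.zpowers x)
        = Subgroup.zpowers (w : G ⧸ K) := by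
      rw [MonoidHom.map_zpowers, hxπ]
    have hordxb : orderOf (w : G ⧸ K) = p := by
      refine orderOf_eq_prime ?_ hxb1
      rw [← hxπ, ← map_pow, hexp x hxP, map_one]
    have hcardX : Nat.card (Subgroup.zpowers (w : G ⧸ K)) = p := by
      rw [Nat.card_zpowers, hordxb]
    have hXV : Subgroup.zpowers (w : G ⧸ K) ≤ Subgroup.map (QuotientGroup.mk' K) L :=
      Subgroup.zpowers_le.mpr hxbV
    -- finisher when L = zpowers x ⊔ K
    have finish1 : Subgroup.zpowers x ⊔ K = L →
        ∃ q : ℕ, q.Prime ∧ Nat.card (Subgroup.map (QuotientGroup.mk' K) L) = q := by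
      intro hsup
      refine ⟨p, hp, ?_⟩
      have hmapK : Subgroup.map (QuotientGroup.mk' K) K = ⊥ := by
        rw [eq_bot_iff]
        rintro _ ⟨k, hk, rfl⟩
        simpa [Subgroup.mem_bot] using (QuotientGroup.eq_one_iff k).mpr hk
      rw [← hsup, Subgroup.map_sup, hmapH, hmapK, sup_bot_eq, hcardX]
    -- the Π-property case
    have piCase : PiProperty G (Subgroup.zpowers x) →
        ∃ q : ℕ, q.Prime ∧ Nat.card (Subgroup.map (QuotientGroup.mk' K) L) = q := by
      intro hPi
      have happ := hPi K L hKi ⟨hKn, hLn, hKL, hmin⟩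
      have hA : Subgroup.map (QuotientGroup.mk' K) (Subgroup.zpowers x)
          ⊓ Subgroup.map (QuotientGroup.mk' K) L = Subgroup.zpowers (w : G ⧸ K) := by
        rw [hmapH]
        exact inf_eq_left.mpr hXV
      rw [hA] at happ
      have hSN : (S : Subgroup (G ⧸ K)) ≤ (Subgroup.normalizer ((Subgroup.zpowers (w : G ⧸ K)) : Set (G ⧸ K))) := by
        intro s hs
        have hfix : ∀ h : G ⧸ K, h ∈ Subgroup.zpowers (w : G ⧸ K) → s * h * s⁻¹ = h := by
          intro h hh
          obtain ⟨k, rfl⟩ := Subgroup.mem_zpowers_iff.mp hh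
          have hcw : Commute s ((w : G ⧸ K)) := hcent s hs
          have hc : Commute s ((w : G ⧸ K) ^ k) := hcw.zpow_right k
          rw [hc.eq, mul_inv_cancel_right]
        rw [Subgroup.mem_normalizer_iff]
        intro h
        constructor
        · intro hh
          rw [hfix h hh]
          exact hh
        · intro hh
          obtain ⟨k, hk⟩ := Subgroup.mem_zpowers_iff.mp hh
          have hcw : Commute s ((w : G ⧸ K)) := hcent s hs
          have hc : Commute s ((w : G ⧸ K) ^ k) := hcw.zpow_right k
          have heq : h = (w : G ⧸ K) ^ k := by
            calc h = s⁻¹ * (s * h * s⁻¹) * s := by group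
            _ = s⁻¹ * (w : G ⧸ K) ^ k * s := by rw [← hk]
            _ = (w : G ⧸ K) ^ k := by rw [hc.inv_left.eq, inv_mul_cancel_right]
          rw [heq]
          exact Subgroup.mem_zpowers_iff.mpr ⟨k, rfl⟩
      have hp_ndvd : ¬ p ∣ (Subgroup.normalizer ((Subgroup.zpowers (w : G ⧸ K)) : Set (G ⧸ K))).index := by
        intro hdvd
        have hdvd2 : (Subgroup.normalizer ((Subgroup.zpowers (w : G ⧸ K)) : Set (G ⧸ K))).index
            ∣ (S : Subgroup (G ⧸ K)).index := Subgroup.index_dvd_of_le hSN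
        exact Sylow.not_dvd_index S (hdvd.trans hdvd2)
      have hidx1 : (Subgroup.normalizer ((Subgroup.zpowers (w : G ⧸ K)) : Set (G ⧸ K))).index = 1 := by
        by_contra hne
        obtain ⟨q, hq, hqdvd⟩ := Nat.exists_prime_and_dvd hne
        have hq2 := happ q hq hqdvd
        rw [hcardX] at hq2
        have : q = p := (Nat.prime_dvd_prime_iff_eq hq hp).mp hq2
        exact hp_ndvd (this ▸ hqdvd)
      have hXnormal : (Subgroup.zpowers (w : G ⧸ K)).Normal :=
        Subgroup.normalizer_eq_top_iff.mp (Subgroup.index_eq_one.mp hidx1)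
      have hcomap : Subgroup.comap (QuotientGroup.mk' K) (Subgroup.zpowers (w : G ⧸ K))
          = Subgroup.zpowers x ⊔ K := by
        rw [← hmapH, Subgroup.comap_map_eq, QuotientGroup.ker_mk']
      have hHKnormal : (Subgroup.zpowers x ⊔ K).Normal := hcomap ▸ hXnormal.comap _
      rcases hmin (Subgroup.zpowers x ⊔ K) hHKnormal le_sup_right (sup_le hHle hKL.le)
        with h | h
      · exact absurd (h ▸ (le_sup_left : Subgroup.zpowers x ≤ _) (Subgroup.mem_zpowers x)) hxK
      · exact finish1 h
    -- the complemented case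
    have compCase : ∀ T : Subgroup G, (Subgroup.zpowers x : Set G) * (T : Set G) = Set.univ →
        Subgroup.zpowers x ⊓ T = ⊥ →
        ∃ q : ℕ, q.Prime ∧ Nat.card (Subgroup.map (QuotientGroup.mk' K) L) = q := by
      intro T hprod hHT
      haveI hMn : (L ⊓ T).Normal := by
        refine ⟨fun m hm g => ?_⟩
        have hg : g ∈ (Subgroup.zpowers x : Set G) * (T : Set G) := by rw [hprod]; trivial
        obtain ⟨h, hh, t, ht, rfl⟩ := hg
        have hm' : t * m * t⁻¹ ∈ L ⊓ T :=
          ⟨hLn.conj_mem m hm.1 t, by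
            have := T.mul_mem (T.mul_mem ht hm.2) (T.inv_mem ht)
            simpa [mul_assoc] using this⟩
        have hcm : h * (t * m * t⁻¹) * h⁻¹ = t * m * t⁻¹ := by
          have hc := hcomm h (hLP (hHle hh)) (t * m * t⁻¹) (hLP hm'.1)
          rw [hc, mul_inv_cancel_right]
        have heq : (h * t) * m * (h * t)⁻¹ = t * m * t⁻¹ := by
          rw [mul_inv_rev, ← hcm]
          group
        rw [heq]
        exact hm'
      rcases hmin ((L ⊓ T) ⊔ K) inferInstance le_sup_right (sup_le inf_le_left hKL.le)
        with h | h
      · -- L ⊓ T ≤ K, hence L = ⟨x⟩ ⊔ K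
        have hMK : L ⊓ T ≤ K := le_sup_left.trans h.le
        apply finish1
        refine le_antisymm (sup_le hHle hKL.le) ?_
        intro l hl
        have hl2 : l ∈ (Subgroup.zpowers x : Set G) * (T : Set G) := by rw [hprod]; trivial
        obtain ⟨a, ha, t, ht, rfl⟩ := hl2
        have htL : t ∈ L := by
          have haL : a ∈ L := hHle ha
          have ht2 : t = a⁻¹ * (a * t) := by group
          rw [ht2]
          exact L.mul_mem (L.inv_mem haL) hl
        exact Subgroup.mul_mem _ ((le_sup_left : Subgroup.zpowers x ≤ _) ha)
          ((le_sup_right : K ≤ _) (hMK ⟨htL, ht⟩))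
      · -- recurse on the chief factor (K ⊓ (L ⊓ T), L ⊓ T)
        have hMneL : L ⊓ T ≠ L := by
          intro hML
          have hLT : L ≤ T := by rw [← hML]; exact inf_le_right
          have hxT : x ∈ Subgroup.zpowers x ⊓ T := ⟨Subgroup.mem_zpowers x, hLT hxL⟩
          rw [hHT, Subgroup.mem_bot] at hxT
          exact hx1 hxT
        have hMltL : L ⊓ T < L := lt_of_le_of_ne inf_le_left hMneL
        have hcardM : Nat.card (L ⊓ T : Subgroup G) ≤ n := by
          have hlt : Nat.card (L ⊓ T : Subgroup G) < Nat.card L := by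
            have hss : ((L ⊓ T : Subgroup G) : Set G) ⊂ (L : Set G) := by
              exact_mod_cast hMltL
            have h2 := Set.ncard_lt_ncard hss (Set.toFinite _)
            have h3 : Nat.card ↥((L ⊓ T : Subgroup G) : Set G)
                < Nat.card ↥((L : Subgroup G) : Set G) := by
              rw [Nat.card_coe_set_eq, Nat.card_coe_set_eq]
              exact h2
            exact h3
          omega
        have hchief' : IsChiefFactor G (K ⊓ (L ⊓ T)) (L ⊓ T) := by
          refine ⟨inferInstance, hMn, ?_, ?_⟩
          · refine lt_of_le_of_ne inf_le_right ?_
            intro heq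
            have hMK : L ⊓ T ≤ K := by rw [← heq]; exact inf_le_left
            have hsupK : (L ⊓ T) ⊔ K = K := sup_eq_right.mpr hMK
            rw [h] at hsupK
            exact hKL.ne hsupK.symm
          · intro N hN hKMN hNM
            haveI := hN
            have hNKle : N ⊔ K ≤ L := by
              rw [← h]
              exact sup_le (hNM.trans le_sup_left) le_sup_right
            rcases hmin (N ⊔ K) inferInstance le_sup_right hNKle with h2 | h2
            · left
              have hNle : N ≤ K := le_sup_left.trans h2.le
              exact le_antisymm (le_inf hNle hNM) hKMN
            · right
              refine le_antisymm hNM ?_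
              intro m hm
              have hmNK : m ∈ N ⊔ K := by
                rw [h2, ← h]
                exact (le_sup_left : L ⊓ T ≤ _) hm
              rw [← SetLike.mem_coe, Subgroup.mul_normal N K] at hmNK
              obtain ⟨a, ha, k, hk, heq⟩ := hmNK
              have hkM : k ∈ L ⊓ T := by
                have hk2 : k = a⁻¹ * m := by rw [← heq]; group
                rw [hk2]
                exact (L ⊓ T).mul_mem ((L ⊓ T).inv_mem (hNM ha)) hm
              have : k ∈ K ⊓ (L ⊓ T) := ⟨hk, hkM⟩
              exact heq ▸ N.mul_mem ha (hKMN this)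
          -- end minimality
        obtain ⟨q, hq, hrel⟩ := ih (L ⊓ T) (K ⊓ (L ⊓ T)) hcardM hchief'
          (inf_le_left.trans hLP)
        refine ⟨q, hq, ?_⟩
        have e1 : (K ⊓ (L ⊓ T)).relIndex (L ⊓ T) = K.relIndex (L ⊓ T) := by
          unfold Subgroup.relIndex
          congr 1
          ext ⟨m, hm⟩
          simp [Subgroup.mem_subgroupOf, hm]
        have e2 : K.relIndex (L ⊓ T) = K.relIndex ((L ⊓ T) ⊔ K) := by
          rw [Subgroup.relIndex, Subgroup.relIndex, Subgroup.index_eq_card,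
            Subgroup.index_eq_card]
          exact Nat.card_congr (QuotientGroup.quotientInfEquivProdNormalQuotient (L ⊓ T) K).toEquiv
        rw [h] at e2
        rw [← hVrel, ← e2, ← e1]
        exact hrel
    -- the p-supersoluble T = ⊤ case
    have topCase : IsPSupersoluble p (⊤ : Subgroup G) →
        ∃ q : ℕ, q.Prime ∧ Nat.card (Subgroup.map (QuotientGroup.mk' K) L) = q := by
      intro hsup
      have hsurj : Function.Surjective (⊤ : Subgroup G).subtype :=
        fun g => ⟨⟨g, trivial⟩, rfl⟩
      have hchief' : IsChiefFactor ↥(⊤ : Subgroup G) (K.subgroupOf ⊤) (L.subgroupOf ⊤) := by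
        refine ⟨hKn.comap _, hLn.comap _, ?_, ?_⟩
        · refine lt_of_le_of_ne (Subgroup.comap_mono hKL.le) ?_
          intro heq
          have : (⟨x, trivial⟩ : ↥(⊤ : Subgroup G)) ∈ L.subgroupOf ⊤ := hxL
          rw [← heq] at this
          exact hxK this
        · intro N hN h1' h2'
          have hNn : (N.map (⊤ : Subgroup G).subtype).Normal := hN.map _ hsurj
          have hKle : K ≤ N.map (⊤ : Subgroup G).subtype := by
            have := Subgroup.map_mono (f := (⊤ : Subgroup G).subtype) h1'
            rwa [Subgroup.subgroupOf_map_subtype, inf_top_eq] at this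
          have hLge : N.map (⊤ : Subgroup G).subtype ≤ L := by
            have := Subgroup.map_mono (f := (⊤ : Subgroup G).subtype) h2'
            rwa [Subgroup.subgroupOf_map_subtype, inf_top_eq] at this
          rcases hmin _ hNn hKle hLge with h3 | h3
          · left
            have h4 := congrArg (Subgroup.comap (⊤ : Subgroup G).subtype) h3
            rwa [Subgroup.comap_map_eq_self_of_injective
              (Subgroup.subtype_injective _)] at h4
          · right
            have h4 := congrArg (Subgroup.comap (⊤ : Subgroup G).subtype) h3
            rwa [Subgroup.comap_map_eq_self_of_injective
              (Subgroup.subtype_injective _)] at h4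
      have e : (K.subgroupOf ⊤).relIndex (L.subgroupOf ⊤) = K.relIndex L := by
        show (K.comap (⊤ : Subgroup G).subtype).relIndex (L.comap (⊤ : Subgroup G).subtype)
          = K.relIndex L
        rw [Subgroup.relIndex_comap, Subgroup.map_comap_eq, Subgroup.range_subtype,
          top_inf_eq]
      have hpdvd : p ∣ K.relIndex L := by
        rw [hVrel]
        obtain ⟨m, hm⟩ := (IsPGroup.iff_card).mp hVp
        rcases m with _ | m
        · exfalso
          have hm1 : Nat.card (Subgroup.map (QuotientGroup.mk' K) L) = 1 := by
            simpa using hm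
          have hVbot := Subgroup.card_eq_one.mp hm1
          rw [hVbot, Subgroup.mem_bot] at hxbV
          exact hxb1 hxbV
        · rw [hm]
          exact dvd_pow_self p m.succ_ne_zero
      rcases hsup _ _ hchief' with h | h
      · refine ⟨p, hp, ?_⟩
        rw [← hVrel, ← e]
        exact h
      · exfalso
        rw [e] at h
        have h1' := Nat.dvd_gcd hpdvd (dvd_refl p)
        rw [Nat.Coprime] at h
        rw [h] at h1'
        exact hp.ne_one (Nat.dvd_one.mp h1')
    -- dispatch
    by_cases hHP : Subgroup.zpowers x < P
    · rcases h1 (Subgroup.zpowers x) hHP (Or.inr hcardH) with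
        ⟨T, hprod, I, hIT, hIH, hPi⟩ | ⟨T, hprod, hsup⟩
      · have hIcard : Nat.card I ∣ p := by
          rw [← hcardH]
          have hd := Subgroup.card_subgroup_dvd_card (I.subgroupOf (Subgroup.zpowers x))
          rwa [Nat.card_congr (Subgroup.subgroupOfEquivOfLe hIH).toEquiv] at hd
        rcases (Nat.Prime.eq_one_or_self_of_dvd hp _ hIcard) with hI1 | hIp
        · have hIbot : I = ⊥ := Subgroup.card_eq_one.mp hI1
          have hbot : Subgroup.zpowers x ⊓ T = ⊥ := le_bot_iff.mp (hIbot ▸ hIT)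
          exact compCase T hprod hbot
        · have hIH' : I = Subgroup.zpowers x :=
            Subgroup.eq_of_le_of_card_ge hIH (by rw [hcardH, hIp])
          exact piCase (hIH' ▸ hPi)
      · have hHTcard : Nat.card ↥(Subgroup.zpowers x ⊓ T) ∣ p := by
          rw [← hcardH]
          have hd := Subgroup.card_subgroup_dvd_card
            ((Subgroup.zpowers x ⊓ T).subgroupOf (Subgroup.zpowers x))
          rwa [Nat.card_congr (Subgroup.subgroupOfEquivOfLe inf_le_left).toEquiv] at hd
        rcases (Nat.Prime.eq_one_or_self_of_dvd hp _ hHTcard) with h1' | hp'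
        · exact compCase T hprod (Subgroup.card_eq_one.mp h1')
        · have hHT : Subgroup.zpowers x ⊓ T = Subgroup.zpowers x :=
            Subgroup.eq_of_le_of_card_ge inf_le_left (by rw [hcardH, hp'])
          have hHle_T : Subgroup.zpowers x ≤ T := by
            rw [← hHT]; exact inf_le_right
          have hTtop : T = ⊤ := by
            rw [eq_top_iff]
            intro g _
            have hg : g ∈ (Subgroup.zpowers x : Set G) * (T : Set G) := by rw [hprod]; trivial
            obtain ⟨a, ha, t, ht, rfl⟩ := hg
            exact T.mul_mem (hHle_T ha) ht
          subst hTtop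
          exact topCase hsup
    · have hHeq : Subgroup.zpowers x = P := by
        rcases lt_or_eq_of_le (hHle.trans hLP) with h | h
        · exact absurd h hHP
        · exact h
      have hLH : L = Subgroup.zpowers x := le_antisymm (hHeq ▸ hLP) hHle
      have hdvd : Nat.card (Subgroup.map (QuotientGroup.mk' K) L) ∣ p := by
        have hd : K.relIndex L ∣ Nat.card L :=
          Dvd.intro_left _ (Subgroup.card_mul_index (K.subgroupOf L))
        have hcardL : Nat.card L = p := by rw [hLH]; exact hcardH
        rw [← hVrel]
        rw [hcardL] at hd
        exact hd
      rcases (Nat.Prime.eq_one_or_self_of_dvd hp _ hdvd) with h | h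
      · exfalso
        have hVbot := Subgroup.card_eq_one.mp h
        rw [hVbot, Subgroup.mem_bot] at hxbV
        exact hxb1 hxbV
      · exact ⟨p, hp, h⟩

end MyKey

theorem elementary_abelian_in_hypercentre {G : Type*} [Group G] [Finite G]
    (p : ℕ) (hp : p.Prime) (P : Subgroup G) [P.Normal] (hPp : IsPGroup p P)
    (helem : (∀ x ∈ P, x ^ p = 1) ∧ ∀ x ∈ P, ∀ y ∈ P, x * y = y * x)
    (h1 : ∀ H : Subgroup G, H < P → (Nat.card H = 1 ∨ Nat.card H = p) →
      PiSupplemented G H ∨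
        ∃ T : Subgroup G, (H : Set G) * (T : Set G) = (Set.univ : Set G) ∧
          IsPSupersoluble p T)
    (h4 : p = 2 → ¬ QuaternionFree P →
      ∀ H : Subgroup G, H ≤ P → IsCyclic H → Nat.card H = 4 →
        PiSupplemented G H ∨
          ∃ T : Subgroup G, (H : Set G) * (T : Set G) = (Set.univ : Set G) ∧
            IsPSupersoluble 2 T) :
    ∃ Z : Subgroup G, Z.Normal ∧ P ≤ Z ∧
      ∀ K L : Subgroup G, IsChiefFactor G K L → L ≤ Z →
        ∃ q : ℕ, q.Prime ∧ K.relIndex L = q := by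
  refine ⟨P, inferInstance, le_rfl, fun K L hcf hle => ?_⟩
  exact myKey p hp P hPp helem.1 helem.2 h1 (Nat.card L) L K le_rfl hcf hle
end
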